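/- arXiv:1401.5595 — 4 statements merged into one kernel-verified Lean document; each statement's English description precedes it below -/
import Mathlib

section
/- Asymptotic expansion of the single-level jump rates: Fix an integer N ≥ 1, a real θ > 0, an index a ∈ {1, …, N}, and reals δ > 0, M > 0. For ε > 0 and y ∈ ℝ^N with y_1 < y_2 < ⋯ < y_N define P_ε(y, a) := ε^{−1} · ∏_{b=1}^{a−1} [ ((y_a − y_b)ε^{−1/2} + θ(a−b+1)) / ((y_a − y_b)ε^{−1/2} + θ(a−b)) ] · ∏_{b=a+1}^{N} [ ((y_b − y_a)ε^{−1/2} + θ(b−a−1)) / ((y_b − y_a)ε^{−1/2} + θ(b−a)) ]. Then there exist constants C > 0 and ε_0 > 0 such that for all ε ∈ (0, ε_0) and all y with y_1 < ⋯ < y_N and y_{j+1} − y_j ≥ δ for all j, one has | P_ε(y, a) − ε^{−1} − ε^{−1/2} Σ_{b≠a} θ/(y_a − y_b) | ≤ C. -/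
open Real

lemma prod_one_add_sub {ι : Type*} [DecidableEq ι] (T : Finset ι) (t : ι → ℝ) (m : ℝ)
    (hm0 : 0 ≤ m) (hm1 : m ≤ 1) (h : ∀ b ∈ T, |t b| ≤ m) :
    |∏ b ∈ T, (1 + t b) - 1 - ∑ b ∈ T, t b| ≤ (T.card : ℝ)^2 * 2 ^ T.card * m ^ 2 := by
  classical
  revert h
  induction T using Finset.induction_on with
  | empty => intro _; simp
  | @insert c T hc ih =>
    intro h
    have hm' : ∀ b ∈ T, |t b| ≤ m := fun b hb => h b (Finset.mem_insert_of_mem hb)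
    have IH := ih hm'
    have htc : |t c| ≤ m := h c (Finset.mem_insert_self c T)
    have h2n : (1:ℝ) ≤ 2 ^ T.card := one_le_pow₀ (by norm_num)
    have hn0 : (0:ℝ) ≤ (T.card : ℝ) := Nat.cast_nonneg _
    have hS : |∑ b ∈ T, t b| ≤ (T.card : ℝ) * m := by
      calc |∑ b ∈ T, t b| ≤ ∑ b ∈ T, |t b| := Finset.abs_sum_le_sum_abs _ _
        _ ≤ ∑ _b ∈ T, m := Finset.sum_le_sum hm'
        _ = (T.card : ℝ) * m := by rw [Finset.sum_const, nsmul_eq_mul]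
    have hP1 : |∏ b ∈ T, (1 + t b) - 1| ≤ ((T.card:ℝ)^2 * 2^T.card + T.card) * m := by
      have e : ∏ b ∈ T, (1 + t b) - 1
          = (∏ b ∈ T, (1 + t b) - 1 - ∑ b ∈ T, t b) + ∑ b ∈ T, t b := by ring
      rw [e]
      calc |(∏ b ∈ T, (1 + t b) - 1 - ∑ b ∈ T, t b) + ∑ b ∈ T, t b|
          ≤ |∏ b ∈ T, (1 + t b) - 1 - ∑ b ∈ T, t b| + |∑ b ∈ T, t b| := abs_add_le _ _
        _ ≤ (T.card:ℝ)^2 * 2^T.card * m^2 + (T.card:ℝ) * m := add_le_add IH hS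
        _ ≤ ((T.card:ℝ)^2 * 2^T.card + T.card) * m := by
              nlinarith [mul_le_mul_of_nonneg_left hm1
                (mul_nonneg (mul_nonneg (sq_nonneg ((T.card:ℝ))) (zero_le_one.trans h2n)) hm0)]
    rw [Finset.prod_insert hc, Finset.sum_insert hc, Finset.card_insert_of_notMem hc]
    have key : (1 + t c) * ∏ b ∈ T, (1 + t b) - 1 - (t c + ∑ b ∈ T, t b)
        = (∏ b ∈ T, (1 + t b) - 1 - ∑ b ∈ T, t b) + (∏ b ∈ T, (1 + t b) - 1) * t c := by ring
    rw [key]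
    have habs : |(∏ b ∈ T, (1 + t b) - 1 - ∑ b ∈ T, t b) + (∏ b ∈ T, (1 + t b) - 1) * t c|
        ≤ (T.card:ℝ)^2 * 2^T.card * m^2 + (((T.card:ℝ)^2 * 2^T.card + T.card) * m) * m := by
      calc _ ≤ |∏ b ∈ T, (1 + t b) - 1 - ∑ b ∈ T, t b| + |∏ b ∈ T, (1 + t b) - 1| * |t c| := by
              rw [← abs_mul]; exact abs_add_le _ _
        _ ≤ _ := by
              refine add_le_add IH ?_
              exact mul_le_mul hP1 htc (abs_nonneg _) (by positivity)
    have hcoef : (T.card:ℝ)^2*2^T.card + ((T.card:ℝ)^2*2^T.card + T.card)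
        ≤ ((T.card:ℝ)+1)^2 * 2^(T.card+1) := by
      have h2 : (2:ℝ)^(T.card+1) = 2 * 2^T.card := by rw [pow_succ]; ring
      rw [h2]
      nlinarith [mul_le_mul_of_nonneg_left h2n hn0,
        mul_le_mul_of_nonneg_left h2n (mul_nonneg hn0 hn0)]
    refine habs.trans ?_
    push_cast
    nlinarith [mul_le_mul_of_nonneg_right hcoef (sq_nonneg m)]

lemma case_bound {θ s x k C δ : ℝ} (hθ : 0 < θ) (hs : 0 < s) (hδ : 0 < δ)
    (hx : δ ≤ x) (hk1 : 1 ≤ k) (hkC : k ≤ C) :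
    |θ / (x * s + θ * k)| ≤ θ / (δ * s) ∧
    |s * s * (θ / (x * s + θ * k)) - s * (θ / x)| ≤ C * θ^2 / δ^2 := by
  have hx0 : 0 < x := hδ.trans_le hx
  have hDs : δ * s ≤ x * s + θ * k := by nlinarith
  have hD0 : 0 < x * s + θ * k := lt_of_lt_of_le (by positivity) hDs
  constructor
  · rw [abs_of_pos (by positivity)]
    gcongr
  · have heq : s * s * (θ / (x * s + θ * k)) - s * (θ / x)
        = -(s * θ^2 * k) / ((x * s + θ * k) * x) := by
      field_simp
      ring
    rw [heq, abs_div, abs_neg, abs_of_nonneg (le_of_lt (mul_pos (mul_pos hs (pow_pos hθ 2)) (lt_of_lt_of_le zero_lt_one hk1))), abs_of_pos (mul_pos hD0 hx0),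
      div_le_div_iff₀ (mul_pos hD0 hx0) (by positivity)]
    have hDx : δ * s * δ ≤ (x * s + θ * k) * x :=
      mul_le_mul hDs hx hδ.le hD0.le
    nlinarith [mul_le_mul_of_nonneg_left hDx (le_of_lt (mul_pos (lt_of_lt_of_le (lt_of_lt_of_le zero_lt_one hk1) hkC) (pow_pos hθ 2))),
      mul_le_mul_of_nonneg_right hkC (le_of_lt (mul_pos (mul_pos hs (pow_pos hθ 2)) (pow_pos hδ 2)))]

/-- **Asymptotic expansion of the single-level jump rates.** For the jump rate
`P_ε(y,a) = ε⁻¹ ∏_{b<a} [((y_a−y_b)ε^{−1/2}+θ(a−b+1))/((y_a−y_b)ε^{−1/2}+θ(a−b))]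
  ∏_{b>a} [((y_b−y_a)ε^{−1/2}+θ(b−a−1))/((y_b−y_a)ε^{−1/2}+θ(b−a))]`
one has `P_ε(y,a) = ε⁻¹ + ε^{−1/2} Σ_{b≠a} θ/(y_a−y_b) + O(1)`, uniformly over
configurations with adjacent gaps at least `δ`. -/
theorem single_level_rate_expansion (N : ℕ) (hN : 1 ≤ N) (θ : ℝ) (hθ : 0 < θ)
    (a : Fin N) (δ M : ℝ) (hδ : 0 < δ) (hM : 0 < M) :
    ∃ C > 0, ∃ ε₀ > 0, ∀ ε : ℝ, 0 < ε → ε < ε₀ →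
      ∀ y : Fin N → ℝ, StrictMono y →
        (∀ i j : Fin N, (j : ℕ) = (i : ℕ) + 1 → δ ≤ y j - y i) →
        |ε⁻¹ *
            (∏ b ∈ Finset.Iio a,
              ((y a - y b) * ε ^ (-(1 : ℝ) / 2) + θ * ((a : ℝ) - (b : ℝ) + 1)) /
                ((y a - y b) * ε ^ (-(1 : ℝ) / 2) + θ * ((a : ℝ) - (b : ℝ)))) *
            (∏ b ∈ Finset.Ioi a,
              ((y b - y a) * ε ^ (-(1 : ℝ) / 2) + θ * ((b : ℝ) - (a : ℝ) - 1)) /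
                ((y b - y a) * ε ^ (-(1 : ℝ) / 2) + θ * ((b : ℝ) - (a : ℝ)))) -
          ε⁻¹ -
          ε ^ (-(1 : ℝ) / 2) * ∑ b ∈ Finset.univ.erase a, θ / (y a - y b)| ≤ C := by
  classical
  refine ⟨(N:ℝ)^2 * 2^N * (θ^2/δ^2) + (N:ℝ) * ((N:ℝ) * θ^2/δ^2) + 1, by positivity,
    min 1 ((δ/θ)^2), lt_min one_pos (by positivity), ?_⟩
  intro ε hε hε₀ y hy hgap
  set s : ℝ := ε ^ (-(1 : ℝ) / 2) with hsdef
  have hs0 : 0 < s := Real.rpow_pos_of_pos hε _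
  have hss : s * s = ε⁻¹ := by
    rw [hsdef, ← Real.rpow_add hε]
    norm_num [Real.rpow_neg_one]
  -- s is large
  have hθδs : θ / δ ≤ s := by
    have hε2 : ε < (δ/θ)^2 := hε₀.trans_le (min_le_right _ _)
    have h1 : ((δ/θ)^2)⁻¹ < ε⁻¹ := by
      apply inv_strictAnti₀ hε hε2
    have h2 : (θ/δ)^2 < s * s := by
      rw [hss]
      calc (θ/δ)^2 = ((δ/θ)^2)⁻¹ := by
            field_simp
        _ < ε⁻¹ := h1
    nlinarith [div_pos hθ hδ]
  set m : ℝ := θ / (δ * s) with hmdef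
  have hm0 : 0 ≤ m := by positivity
  have hm1 : m ≤ 1 := by
    rw [hmdef, div_le_one (by positivity)]
    rw [div_le_iff₀ hδ] at hθδs
    nlinarith
  -- quantitative gaps
  have hgap2 : ∀ i j : Fin N, i < j → δ ≤ y j - y i := by
    intro i j hij
    have hij' : (i:ℕ) < (j:ℕ) := hij
    have hjN : (j:ℕ) < N := j.isLt
    set i' : Fin N := ⟨(i:ℕ)+1, by omega⟩ with hi'
    have h1 : δ ≤ y i' - y i := hgap i i' rfl
    have h2 : y i' ≤ y j := hy.monotone (by rw [Fin.le_def]; simp [hi']; omega)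
    linarith
  -- the multiplicative increments
  set t : Fin N → ℝ := fun b =>
    if b < a then θ / ((y a - y b) * s + θ * ((a : ℝ) - (b : ℝ)))
    else -(θ / ((y b - y a) * s + θ * ((b : ℝ) - (a : ℝ)))) with htdef
  -- case analysis facts
  have hterm : ∀ b ∈ Finset.univ.erase a,
      |t b| ≤ m ∧ |s * s * t b - s * (θ / (y a - y b))| ≤ (N:ℝ) * θ^2 / δ^2 := by
    intro b hb
    have hba : b ≠ a := (Finset.mem_erase.mp hb).1
    rcases lt_or_gt_of_ne hba with h | h
    · have hx : δ ≤ y a - y b := hgap2 b a h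
      have hk1 : (1:ℝ) ≤ (a:ℝ) - (b:ℝ) := by
        have : (b:ℕ) + 1 ≤ (a:ℕ) := h
        have := (Nat.cast_le (α := ℝ)).mpr this
        push_cast at this
        linarith
      have hkN : (a:ℝ) - (b:ℝ) ≤ (N:ℝ) := by
        have h1 : (a:ℕ) < N := a.isLt
        have := (Nat.cast_lt (α := ℝ)).mpr h1
        have h2 : (0:ℝ) ≤ (b:ℕ) := Nat.cast_nonneg _
        linarith
      have hc := case_bound hθ hs0 hδ hx hk1 hkN
      simp only [htdef, if_pos h]
      exact hc
    · have hx : δ ≤ y b - y a := hgap2 a b h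
      have hk1 : (1:ℝ) ≤ (b:ℝ) - (a:ℝ) := by
        have : (a:ℕ) + 1 ≤ (b:ℕ) := h
        have := (Nat.cast_le (α := ℝ)).mpr this
        push_cast at this
        linarith
      have hkN : (b:ℝ) - (a:ℝ) ≤ (N:ℝ) := by
        have h1 : (b:ℕ) < N := b.isLt
        have := (Nat.cast_lt (α := ℝ)).mpr h1
        have h2 : (0:ℝ) ≤ (a:ℕ) := Nat.cast_nonneg _
        linarith
      have hc := case_bound hθ hs0 hδ hx hk1 hkN
      simp only [htdef, if_neg (not_lt.mpr h.le)]
      refine ⟨by rw [abs_neg]; exact hc.1, ?_⟩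
      have hrw : s * s * (-(θ / ((y b - y a) * s + θ * ((b:ℝ) - (a:ℝ))))) - s * (θ / (y a - y b))
          = -(s * s * (θ / ((y b - y a) * s + θ * ((b:ℝ) - (a:ℝ)))) - s * (θ / (y b - y a))) := by
        have hyab : y a - y b = -(y b - y a) := by ring
        rw [hyab, div_neg]
        ring
      rw [hrw, abs_neg]
      exact hc.2
  -- rewrite the products
  have hD1 : ∀ b ∈ Finset.Iio a, (0:ℝ) < (y a - y b) * s + θ * ((a:ℝ) - (b:ℝ)) := by
    intro b hb
    have hb' : b < a := Finset.mem_Iio.mp hb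
    have hx : δ ≤ y a - y b := hgap2 b a hb'
    have hk1 : (1:ℝ) ≤ (a:ℝ) - (b:ℝ) := by
      have : (b:ℕ) + 1 ≤ (a:ℕ) := hb'
      have := (Nat.cast_le (α := ℝ)).mpr this
      push_cast at this
      linarith
    nlinarith
  have hD2 : ∀ b ∈ Finset.Ioi a, (0:ℝ) < (y b - y a) * s + θ * ((b:ℝ) - (a:ℝ)) := by
    intro b hb
    have hb' : a < b := Finset.mem_Ioi.mp hb
    have hx : δ ≤ y b - y a := hgap2 a b hb'
    have hk1 : (1:ℝ) ≤ (b:ℝ) - (a:ℝ) := by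
      have : (a:ℕ) + 1 ≤ (b:ℕ) := hb'
      have := (Nat.cast_le (α := ℝ)).mpr this
      push_cast at this
      linarith
    nlinarith
  have hIio : (∏ b ∈ Finset.Iio a,
        ((y a - y b) * s + θ * ((a : ℝ) - (b : ℝ) + 1)) /
          ((y a - y b) * s + θ * ((a : ℝ) - (b : ℝ))))
      = ∏ b ∈ Finset.Iio a, (1 + t b) := by
    refine Finset.prod_congr rfl fun b hb => ?_
    have hb' : b < a := Finset.mem_Iio.mp hb
    have hD := hD1 b hb
    simp only [htdef, if_pos hb']
    field_simp
    ring
  have hIoi : (∏ b ∈ Finset.Ioi a,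
        ((y b - y a) * s + θ * ((b : ℝ) - (a : ℝ) - 1)) /
          ((y b - y a) * s + θ * ((b : ℝ) - (a : ℝ))))
      = ∏ b ∈ Finset.Ioi a, (1 + t b) := by
    refine Finset.prod_congr rfl fun b hb => ?_
    have hb' : a < b := Finset.mem_Ioi.mp hb
    have hD := hD2 b hb
    simp only [htdef, if_neg (not_lt.mpr hb'.le)]
    field_simp
    ring
  have hdisj : Disjoint (Finset.Iio a) (Finset.Ioi a) := by
    rw [Finset.disjoint_left]
    intro b hb hb'
    exact lt_asymm (Finset.mem_Iio.mp hb) (Finset.mem_Ioi.mp hb')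
  have hsplit : Finset.Iio a ∪ Finset.Ioi a = Finset.univ.erase a := by
    ext b
    simp only [Finset.mem_union, Finset.mem_Iio, Finset.mem_Ioi, Finset.mem_erase,
      Finset.mem_univ, and_true]
    exact lt_or_lt_iff_ne
  have hprod : (∏ b ∈ Finset.Iio a, (1 + t b)) * ∏ b ∈ Finset.Ioi a, (1 + t b)
      = ∏ b ∈ Finset.univ.erase a, (1 + t b) := by
    rw [← Finset.prod_union hdisj, hsplit]
  rw [← hss, hIio, hIoi, mul_assoc, hprod]
  -- decomposition
  set T := Finset.univ.erase a with hT
  set P := ∏ b ∈ T, (1 + t b) with hP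
  set S := ∑ b ∈ T, t b with hS
  have hdecomp : s * s * P - s * s - s * ∑ b ∈ T, θ / (y a - y b)
      = (P - 1 - S) * (s * s) + ∑ b ∈ T, (s * s * t b - s * (θ / (y a - y b))) := by
    rw [Finset.sum_sub_distrib, ← Finset.mul_sum, ← Finset.mul_sum, ← hS]
    ring
  rw [hdecomp]
  have hcardN : T.card ≤ N := by
    calc T.card ≤ (Finset.univ : Finset (Fin N)).card := Finset.card_le_card (Finset.erase_subset _ _)
      _ = N := by simp
  have hcard : (T.card : ℝ) ≤ (N:ℝ) := by exact_mod_cast hcardN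
  have hb1 : |(P - 1 - S) * (s * s)| ≤ (N:ℝ)^2 * 2^N * (θ^2/δ^2) := by
    rw [abs_mul, abs_of_pos (mul_pos hs0 hs0)]
    have h1 := prod_one_add_sub T t m hm0 hm1 (fun b hb => (hterm b hb).1)
    have hms : m^2 * (s * s) = θ^2/δ^2 := by
      rw [hmdef]
      field_simp
    calc |P - 1 - S| * (s * s) ≤ ((T.card:ℝ)^2 * 2^T.card * m^2) * (s * s) := by
          exact mul_le_mul_of_nonneg_right h1 (by positivity)
      _ = (T.card:ℝ)^2 * 2^T.card * (m^2 * (s*s)) := by ring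
      _ = (T.card:ℝ)^2 * 2^T.card * (θ^2/δ^2) := by rw [hms]
      _ ≤ (N:ℝ)^2 * 2^N * (θ^2/δ^2) := by
          have h2 : ((2:ℝ))^T.card ≤ 2^N := pow_le_pow_right₀ one_le_two hcardN
          have h3 : (T.card:ℝ)^2 ≤ (N:ℝ)^2 :=
            pow_le_pow_left₀ (Nat.cast_nonneg _) hcard 2
          apply mul_le_mul_of_nonneg_right _ (by positivity : (0:ℝ) ≤ θ^2/δ^2)
          exact mul_le_mul h3 h2 (by positivity) (by positivity)
  have hb2 : |∑ b ∈ T, (s * s * t b - s * (θ / (y a - y b)))| ≤ (N:ℝ) * ((N:ℝ) * θ^2/δ^2) := by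
    calc |∑ b ∈ T, (s * s * t b - s * (θ / (y a - y b)))|
        ≤ ∑ b ∈ T, |s * s * t b - s * (θ / (y a - y b))| := Finset.abs_sum_le_sum_abs _ _
      _ ≤ ∑ _b ∈ T, (N:ℝ) * θ^2/δ^2 := Finset.sum_le_sum fun b hb => (hterm b hb).2
      _ = (T.card:ℝ) * ((N:ℝ) * θ^2/δ^2) := by rw [Finset.sum_const, nsmul_eq_mul]
      _ ≤ (N:ℝ) * ((N:ℝ) * θ^2/δ^2) := by
          apply mul_le_mul_of_nonneg_right hcard (by positivity)
  calc |(P - 1 - S) * (s * s) + ∑ b ∈ T, (s * s * t b - s * (θ / (y a - y b)))|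
      ≤ |(P - 1 - S) * (s * s)| + |∑ b ∈ T, (s * s * t b - s * (θ / (y a - y b)))| := abs_add_le _ _
    _ ≤ (N:ℝ)^2 * 2^N * (θ^2/δ^2) + (N:ℝ) * ((N:ℝ) * θ^2/δ^2) := add_le_add hb1 hb2
    _ ≤ (N:ℝ)^2 * 2^N * (θ^2/δ^2) + (N:ℝ) * ((N:ℝ) * θ^2/δ^2) + 1 := by linarith
end

section
/- Asymptotic expansion of the multilevel jump rates: Fix integers 1 ≤ i ≤ k ≤ N, a real θ > 0, and a real δ > 0. For ε > 0 and reals ŷ^k_1 > ŷ^k_2 > ⋯ > ŷ^k_k and ŷ^{k−1}_1 > ⋯ > ŷ^{k−1}_{k−1} satisfying the strict interlacing ŷ^k_m > ŷ^{k−1}_m > ŷ^k_{m+1} define Q_ε := ε^{−1} · ∏_{m=1}^{i−1} [ ((ŷ^k_m − ŷ^k_i)ε^{−1/2} − 1 + θ(i−m+1)) / ((ŷ^k_m − ŷ^k_i)ε^{−1/2} + θ(i−m)) ] · [ ((ŷ^{k−1}_m − ŷ^k_i)ε^{−1/2} + θ(i−1−m)) / ((ŷ^{k−1}_m − ŷ^k_i)ε^{−1/2}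 − 1 + θ(i−m)) ] · ∏_{n=i}^{k−1} [ ((ŷ^k_i − ŷ^k_{n+1})ε^{−1/2} + θ(n−i) + 1) / ((ŷ^k_i − ŷ^k_{n+1})ε^{−1/2} + θ(n−i+1)) ] · [ ((ŷ^k_i − ŷ^{k−1}_n)ε^{−1/2} + θ(n−i+1)) / ((ŷ^k_i − ŷ^{k−1}_n)ε^{−1/2} + θ(n−i) + 1) ]. Then there exist constants C > 0 and ε_0 > 0 such that for all ε ∈ (0, ε_0) and all such configurations whose pairwise distances |ŷ^k_m − ŷ^k_{m'}| (m ≠ m'), |ŷ^{k−1}_m − ŷ^{k−1}_{m'}| (m ≠ m'), and |ŷ^k_m − ŷ^{k−1}_{m'}| are all at least δ, one has | Q_ε − ε^{−1} − ε^{−1/2} ( Σ_{m=1}^{i−1} [ (θ−1)/(ŷ^k_m − ŷ^k_i) + (1−θ)/(ŷ^{k−1}_m − ŷ^k_i) ] + Σ_{n=i}^{k−1} [ (1−θ)/(ŷ^k_i − ŷ^k_{n+1}) + (θ−1)/(ŷ^k_i − ŷ^{k−1}_n) ] ) | ≤ C. -/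
open Real

lemma frac_est (δ B u d a b c f : ℝ) (hδ : 0 < δ) (hB : 1 ≤ B) (hu : 0 < u)
    (hu' : u ≤ δ / (2 * B)) (hd : δ ≤ d) (ha : |a| ≤ B) (hb : |b| ≤ B)
    (hf : f = (d * u⁻¹ + a) / (d * u⁻¹ + b)) (hc : c = (a - b) / d) :
    |f - 1 - c * u| ≤ 4 * B ^ 2 / δ ^ 2 * u ^ 2 := by
  subst hf hc
  have hd0 : 0 < d := lt_of_lt_of_le hδ hd
  have hB0 : 0 < B := by linarith
  set x := d * u⁻¹ with hx
  have hxu : x * u = d := by rw [hx, mul_assoc, inv_mul_cancel₀ hu.ne', mul_one]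
  have hxl : δ / u ≤ x := by
    rw [div_le_iff₀ hu, hxu]; exact hd
  have h2B : 2 * B ≤ δ / u := by
    rw [le_div_iff₀ hu]
    calc 2 * B * u ≤ 2 * B * (δ / (2 * B)) := by gcongr
    _ = δ := by field_simp
  have hxB : 2 * B ≤ x := le_trans h2B hxl
  have hbb := abs_le.mp hb
  have hxb : x / 2 ≤ x + b := by linarith
  have hxb0 : 0 < x + b := by linarith
  have hx0 : 0 < x := by linarith
  have key : (x + a) / (x + b) - 1 - (a - b) / d * u = b * (b - a) / ((x + b) * x) := by
    rw [← hxu]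
    field_simp
    ring
  rw [key, abs_div, abs_mul, abs_of_pos (by positivity : (0:ℝ) < (x + b) * x)]
  have hba : |b - a| ≤ 2 * B := by
    calc |b - a| ≤ |b| + |a| := abs_sub _ _
    _ ≤ 2 * B := by linarith
  have hden : δ ^ 2 / (2 * u ^ 2) ≤ (x + b) * x := by
    rw [div_le_iff₀ (by positivity)]
    have h1 : δ ≤ x * u := by rw [hxu]; exact hd
    nlinarith [mul_pos hx0 (mul_pos hu hu), sq_nonneg u]
  calc |b| * |b - a| / ((x + b) * x) ≤ B * (2 * B) / (δ ^ 2 / (2 * u ^ 2)) := by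
        gcongr
  _ = 4 * B ^ 2 / δ ^ 2 * u ^ 2 := by field_simp; ring

lemma prod_expand {ι : Type*} (s : Finset ι) (t : ι → ℝ) (τ : ℝ) (hτ1 : τ ≤ 1)
    (h : ∀ j ∈ s, |t j| ≤ τ) :
    |(∏ j ∈ s, (1 + t j)) - 1 - ∑ j ∈ s, t j| ≤ 3 ^ s.card * τ ^ 2 := by
  induction s using Finset.cons_induction with
  | empty => simp; positivity
  | cons a s ha ih =>
    have hτ0 : 0 ≤ τ := le_trans (abs_nonneg _) (h a (Finset.mem_cons_self a s))
    rw [Finset.prod_cons, Finset.sum_cons, Finset.card_cons]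
    have hP := ih (fun j hj => h j (Finset.mem_cons_of_mem hj))
    have hS : |∑ j ∈ s, t j| ≤ (s.card : ℝ) * τ := by
      calc |∑ j ∈ s, t j| ≤ ∑ j ∈ s, |t j| := Finset.abs_sum_le_sum_abs _ _
      _ ≤ ∑ _j ∈ s, τ := Finset.sum_le_sum (fun j hj => h j (Finset.mem_cons_of_mem hj))
      _ = (s.card : ℝ) * τ := by rw [Finset.sum_const, nsmul_eq_mul]
    have hta : |t a| ≤ τ := h a (Finset.mem_cons_self a s)
    have hn : (s.card : ℝ) ≤ 3 ^ s.card := by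
      exact_mod_cast (Nat.lt_pow_self (by norm_num : 1 < 3) : s.card < 3 ^ s.card).le
    have key : (1 + t a) * (∏ j ∈ s, (1 + t j)) - 1 - (t a + ∑ j ∈ s, t j)
        = (1 + t a) * ((∏ j ∈ s, (1 + t j)) - 1 - ∑ j ∈ s, t j) + t a * ∑ j ∈ s, t j := by
      ring
    rw [key]
    have h1 : |1 + t a| ≤ 1 + τ := by
      have := abs_le.mp hta; rw [abs_le]; constructor <;> linarith
    have h3 : (0:ℝ) < 3 ^ s.card := by positivity
    calc |(1 + t a) * ((∏ j ∈ s, (1 + t j)) - 1 - ∑ j ∈ s, t j) + t a * ∑ j ∈ s, t j|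
        ≤ |1 + t a| * |(∏ j ∈ s, (1 + t j)) - 1 - ∑ j ∈ s, t j| + |t a| * |∑ j ∈ s, t j| := by
          refine (abs_add_le _ _).trans ?_
          rw [abs_mul, abs_mul]
      _ ≤ (1 + τ) * (3 ^ s.card * τ ^ 2) + τ * ((s.card : ℝ) * τ) := by
          gcongr <;> first | positivity | exact abs_nonneg _
      _ ≤ 3 * (3 ^ s.card * τ ^ 2) := by
          nlinarith [mul_le_mul_of_nonneg_left hτ1 (by positivity : (0:ℝ) ≤ 3 ^ s.card * τ ^ 2),
            mul_le_mul_of_nonneg_right hn (sq_nonneg τ)]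
      _ = 3 ^ (s.card + 1) * τ ^ 2 := by rw [pow_succ]; ring

lemma pair_combine (K L u c1 c2 f1 f2 : ℝ) (hu : 0 < u) (hu1 : u ≤ 1)
    (h1 : |f1 - 1 - c1 * u| ≤ K * u ^ 2) (h2 : |f2 - 1 - c2 * u| ≤ K * u ^ 2)
    (hc1 : |c1| ≤ L) (hc2 : |c2| ≤ L) :
    |f1 * f2 - 1 - (c1 + c2) * u| ≤ (2 * K + (K + L) ^ 2) * u ^ 2 := by
  have h0 : 0 ≤ K * u ^ 2 := le_trans (abs_nonneg _) h1
  have hK : 0 ≤ K := by nlinarith [sq_nonneg u, mul_pos hu hu]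
  have hL : 0 ≤ L := le_trans (abs_nonneg _) hc1
  have huu : u ^ 2 ≤ u := by nlinarith
  have e1 : |f1 - 1| ≤ (K + L) * u := by
    calc |f1 - 1| = |(f1 - 1 - c1 * u) + c1 * u| := by ring_nf
    _ ≤ |f1 - 1 - c1 * u| + |c1| * |u| := by refine (abs_add_le _ _).trans ?_; rw [abs_mul]
    _ ≤ K * u ^ 2 + L * u := by rw [abs_of_pos hu]; gcongr
    _ ≤ (K + L) * u := by nlinarith [mul_le_mul_of_nonneg_left huu hK]
  have e2 : |f2 - 1| ≤ (K + L) * u := by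
    calc |f2 - 1| = |(f2 - 1 - c2 * u) + c2 * u| := by ring_nf
    _ ≤ |f2 - 1 - c2 * u| + |c2| * |u| := by refine (abs_add_le _ _).trans ?_; rw [abs_mul]
    _ ≤ K * u ^ 2 + L * u := by rw [abs_of_pos hu]; gcongr
    _ ≤ (K + L) * u := by nlinarith [mul_le_mul_of_nonneg_left huu hK]
  have key : f1 * f2 - 1 - (c1 + c2) * u
      = (f1 - 1 - c1 * u) + (f2 - 1 - c2 * u)
        + (f1 - 1) * (f2 - 1) := by ring
  rw [key]
  calc |(f1 - 1 - c1 * u) + (f2 - 1 - c2 * u) + (f1 - 1) * (f2 - 1)|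
      ≤ |f1 - 1 - c1 * u| + |f2 - 1 - c2 * u| + |f1 - 1| * |f2 - 1| := by
        refine (abs_add_three _ _ _).trans ?_
        rw [abs_mul]
    _ ≤ K * u ^ 2 + K * u ^ 2 + ((K + L) * u) * ((K + L) * u) := by
        gcongr <;> exact abs_nonneg _
    _ = (2 * K + (K + L) ^ 2) * u ^ 2 := by ring

lemma coef_bound (δ B d e : ℝ) (hδ : 0 < δ) (hd : δ ≤ d) (he : |e| ≤ B) :
    |e / d| ≤ B / δ := by
  have hd0 : 0 < d := lt_of_lt_of_le hδ hd
  rw [abs_div, abs_of_pos hd0]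
  exact div_le_div₀ (le_trans (abs_nonneg _) he) he hδ hd

set_option maxHeartbeats 2000000 in
/-- **Asymptotic expansion of the multilevel jump rates.** Here the upper level `k = κ+1`
has particles `y : Fin (κ+1) → ℝ` (in decreasing order) and the lower level `k−1 = κ` has
particles `z : Fin κ → ℝ`, interlacing as `y_m > z_m > y_{m+1}`; the (0-based) index
`i : Fin (κ+1)` corresponds to the paper's `i+1 ∈ {1,…,k}`, and `k ≤ N`.
The multilevel jump rate `Q_ε` satisfies
`Q_ε = ε⁻¹ + ε^{−1/2}(Σ_{m<i} [(θ−1)/(y_m−y_i) + (1−θ)/(z_m−y_i)]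
  + Σ_{n≥i} [(1−θ)/(y_i−y_{n+1}) + (θ−1)/(y_i−z_n)]) + O(1)`,
uniformly over configurations whose pairwise distances are at least `δ`. -/
theorem multilevel_rate_expansion (κ N : ℕ) (hκN : κ + 1 ≤ N) (i : Fin (κ + 1))
    (θ δ : ℝ) (hθ : 0 < θ) (hδ : 0 < δ) :
    ∃ C > 0, ∃ ε₀ > 0, ∀ ε : ℝ, 0 < ε → ε < ε₀ →
      ∀ (y : Fin (κ + 1) → ℝ) (z : Fin κ → ℝ),
        StrictAnti y → StrictAnti z →
        (∀ m : Fin κ, z m < y m.castSucc ∧ y m.succ < z m) →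
        (∀ m m' : Fin (κ + 1), m ≠ m' → δ ≤ |y m - y m'|) →
        (∀ m m' : Fin κ, m ≠ m' → δ ≤ |z m - z m'|) →
        (∀ (m : Fin (κ + 1)) (m' : Fin κ), δ ≤ |y m - z m'|) →
        |ε⁻¹ *
            (∏ m ∈ Finset.univ.filter (fun m : Fin κ => (m : ℕ) < (i : ℕ)),
              (((y m.castSucc - y i) * ε ^ (-(1 : ℝ) / 2) - 1 + θ * ((i : ℝ) - (m : ℝ) + 1)) /
                  ((y m.castSucc - y i) * ε ^ (-(1 : ℝ) / 2) + θ * ((i : ℝ) - (m : ℝ)))) *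
                (((z m - y i) * ε ^ (-(1 : ℝ) / 2) + θ * ((i : ℝ) - 1 - (m : ℝ))) /
                  ((z m - y i) * ε ^ (-(1 : ℝ) / 2) - 1 + θ * ((i : ℝ) - (m : ℝ))))) *
            (∏ n ∈ Finset.univ.filter (fun n : Fin κ => (i : ℕ) ≤ (n : ℕ)),
              (((y i - y n.succ) * ε ^ (-(1 : ℝ) / 2) + θ * ((n : ℝ) - (i : ℝ)) + 1) /
                  ((y i - y n.succ) * ε ^ (-(1 : ℝ) / 2) + θ * ((n : ℝ) - (i : ℝ) + 1))) *
                (((y i - z n) * ε ^ (-(1 : ℝ) / 2) + θ * ((n : ℝ) - (i : ℝ) + 1)) /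
                  ((y i - z n) * ε ^ (-(1 : ℝ) / 2) + θ * ((n : ℝ) - (i : ℝ)) + 1))) -
          ε⁻¹ -
          ε ^ (-(1 : ℝ) / 2) *
            ((∑ m ∈ Finset.univ.filter (fun m : Fin κ => (m : ℕ) < (i : ℕ)),
                ((θ - 1) / (y m.castSucc - y i) + (1 - θ) / (z m - y i))) +
              ∑ n ∈ Finset.univ.filter (fun n : Fin κ => (i : ℕ) ≤ (n : ℕ)),
                ((1 - θ) / (y i - y n.succ) + (θ - 1) / (y i - z n)))| ≤ C := by
  have hκ0 : (0:ℝ) ≤ (κ:ℝ) := Nat.cast_nonneg _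
  obtain ⟨B, hB_def⟩ : ∃ B : ℝ, B = θ * ((κ:ℝ) + 2) + 2 := ⟨_, rfl⟩
  have hB1 : 1 ≤ B := by rw [hB_def]; nlinarith
  have hB0 : 0 < B := by linarith
  obtain ⟨K, hK_def⟩ : ∃ K : ℝ, K = 4 * B ^ 2 / δ ^ 2 := ⟨_, rfl⟩
  have hK0 : 0 < K := by
    rw [hK_def]; exact div_pos (by nlinarith [mul_pos hB0 hB0]) (by positivity)
  obtain ⟨L, hL_def⟩ : ∃ L : ℝ, L = B / δ := ⟨_, rfl⟩
  have hL0 : 0 < L := by rw [hL_def]; exact div_pos hB0 hδ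
  obtain ⟨K1, hK1_def⟩ : ∃ K1 : ℝ, K1 = 2 * K + (K + L) ^ 2 := ⟨_, rfl⟩
  have hK10 : 0 < K1 := by rw [hK1_def]; nlinarith [sq_nonneg (K + L)]
  obtain ⟨K2, hK2_def⟩ : ∃ K2 : ℝ, K2 = 2 * L := ⟨_, rfl⟩
  have hK20 : 0 < K2 := by rw [hK2_def]; linarith
  obtain ⟨M, hM_def⟩ : ∃ M : ℝ, M = K1 + K2 := ⟨_, rfl⟩
  have hM0 : 0 < M := by rw [hM_def]; linarith
  refine ⟨3 ^ κ * M ^ 2 + κ * K1 + 1,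
    by nlinarith [mul_nonneg hκ0 hK10.le,
      mul_nonneg (pow_nonneg (by norm_num : (0:ℝ) ≤ 3) κ) (sq_nonneg M)],
    min 1 (min ((δ / (2 * B)) ^ 2) ((1 / M) ^ 2)),
    lt_min one_pos (lt_min (pow_pos (div_pos hδ (by linarith)) 2)
      (pow_pos (div_pos one_pos hM0) 2)), ?_⟩
  intro ε hε hεε₀ y z hy hz hintl hyy hzz hyz
  obtain ⟨u, hu_def⟩ : ∃ u : ℝ, u = ε ^ ((1:ℝ)/2) := ⟨_, rfl⟩
  have hu : 0 < u := hu_def ▸ Real.rpow_pos_of_pos hε _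
  have hεu : u ^ 2 = ε := by
    rw [hu_def, ← Real.rpow_natCast (ε ^ ((1:ℝ)/2)) 2, ← Real.rpow_mul hε.le]
    norm_num
  have hinv : ε ^ (-(1:ℝ)/2) = u⁻¹ := by
    have hneg : (-(1:ℝ)/2) = -((1:ℝ)/2) := by norm_num
    rw [hneg, Real.rpow_neg hε.le, hu_def]
  have hε1 : ε < 1 := lt_of_lt_of_le hεε₀ (min_le_left _ _)
  have hε2 : ε < (δ / (2 * B)) ^ 2 :=
    lt_of_lt_of_le hεε₀ (le_trans (min_le_right _ _) (min_le_left _ _))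
  have hε3 : ε < (1 / M) ^ 2 :=
    lt_of_lt_of_le hεε₀ (le_trans (min_le_right _ _) (min_le_right _ _))
  have hu1 : u ≤ 1 := by nlinarith [hεu, hε1]
  have hu2 : u ≤ δ / (2 * B) := by nlinarith [hεu, hε2, div_pos hδ (by linarith : (0:ℝ) < 2 * B)]
  have hu3 : M * u ≤ 1 := by
    have h1M : 0 < 1 / M := by positivity
    have : u ≤ 1 / M := by nlinarith [hεu, hε3]
    rw [← le_div_iff₀' hM0]
    exact this
  rw [hinv]
  obtain ⟨F, hF_def⟩ : ∃ F : Fin κ → ℝ, F = fun m : Fin κ =>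
    if (m : ℕ) < (i : ℕ) then
      (((y m.castSucc - y i) * u⁻¹ - 1 + θ * ((i : ℝ) - (m : ℝ) + 1)) /
          ((y m.castSucc - y i) * u⁻¹ + θ * ((i : ℝ) - (m : ℝ)))) *
        (((z m - y i) * u⁻¹ + θ * ((i : ℝ) - 1 - (m : ℝ))) /
          ((z m - y i) * u⁻¹ - 1 + θ * ((i : ℝ) - (m : ℝ))))
    else
      (((y i - y m.succ) * u⁻¹ + θ * ((m : ℝ) - (i : ℝ)) + 1) /
          ((y i - y m.succ) * u⁻¹ + θ * ((m : ℝ) - (i : ℝ) + 1))) *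
        (((y i - z m) * u⁻¹ + θ * ((m : ℝ) - (i : ℝ) + 1)) /
          ((y i - z m) * u⁻¹ + θ * ((m : ℝ) - (i : ℝ)) + 1)) := ⟨_, rfl⟩
  obtain ⟨c, hc_def⟩ : ∃ c : Fin κ → ℝ, c = fun m : Fin κ =>
    (if (m : ℕ) < (i : ℕ) then (θ - 1) / (y m.castSucc - y i) + (1 - θ) / (z m - y i)
    else (1 - θ) / (y i - y m.succ) + (θ - 1) / (y i - z m)) := ⟨_, rfl⟩
  have hP : (∏ m ∈ Finset.univ.filter (fun m : Fin κ => (m : ℕ) < (i : ℕ)),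
        (((y m.castSucc - y i) * u⁻¹ - 1 + θ * ((i : ℝ) - (m : ℝ) + 1)) /
            ((y m.castSucc - y i) * u⁻¹ + θ * ((i : ℝ) - (m : ℝ)))) *
          (((z m - y i) * u⁻¹ + θ * ((i : ℝ) - 1 - (m : ℝ))) /
            ((z m - y i) * u⁻¹ - 1 + θ * ((i : ℝ) - (m : ℝ))))) *
      (∏ n ∈ Finset.univ.filter (fun n : Fin κ => (i : ℕ) ≤ (n : ℕ)),
        (((y i - y n.succ) * u⁻¹ + θ * ((n : ℝ) - (i : ℝ)) + 1) /
            ((y i - y n.succ) * u⁻¹ + θ * ((n : ℝ) - (i : ℝ) + 1))) *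
          (((y i - z n) * u⁻¹ + θ * ((n : ℝ) - (i : ℝ) + 1)) /
            ((y i - z n) * u⁻¹ + θ * ((n : ℝ) - (i : ℝ)) + 1)))
      = ∏ m, F m := by
    rw [Finset.prod_filter, Finset.prod_filter, ← Finset.prod_mul_distrib]
    refine Finset.prod_congr rfl (fun m _ => ?_)
    by_cases hm : (m : ℕ) < (i : ℕ)
    · simp [hF_def, hm, Nat.not_le.mpr hm]
    · simp [hF_def, hm, Nat.not_lt.mp hm]
  have hS : ((∑ m ∈ Finset.univ.filter (fun m : Fin κ => (m : ℕ) < (i : ℕ)),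
        ((θ - 1) / (y m.castSucc - y i) + (1 - θ) / (z m - y i))) +
      ∑ n ∈ Finset.univ.filter (fun n : Fin κ => (i : ℕ) ≤ (n : ℕ)),
        ((1 - θ) / (y i - y n.succ) + (θ - 1) / (y i - z n)))
      = ∑ m, c m := by
    rw [Finset.sum_filter, Finset.sum_filter, ← Finset.sum_add_distrib]
    refine Finset.sum_congr rfl (fun m _ => ?_)
    by_cases hm : (m : ℕ) < (i : ℕ)
    · simp [hc_def, hm, Nat.not_le.mpr hm]
    · simp [hc_def, hm, Nat.not_lt.mp hm]
  rw [mul_assoc, hP, hS]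
  -- per-index estimates
  have hest : ∀ m : Fin κ, |F m - 1 - c m * u| ≤ K1 * u ^ 2 ∧ |c m| ≤ K2 := by
    intro m
    have hiκ : ((i : ℕ) : ℝ) ≤ (κ:ℝ) := by exact_mod_cast i.is_le
    have hmκ : ((m : ℕ) : ℝ) ≤ (κ:ℝ) := by exact_mod_cast (le_of_lt m.is_lt)
    have hi0 : (0:ℝ) ≤ ((i : ℕ) : ℝ) := Nat.cast_nonneg _
    have hm0 : (0:ℝ) ≤ ((m : ℕ) : ℝ) := Nat.cast_nonneg _
    have habs : ∀ r s : ℝ, |r| ≤ (κ:ℝ) + 2 → |s| ≤ 2 → |θ * r + s| ≤ B := by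
      intro r s hr hs
      calc |θ * r + s| ≤ |θ * r| + |s| := abs_add_le _ _
      _ = θ * |r| + |s| := by rw [abs_mul, abs_of_pos hθ]
      _ ≤ θ * ((κ:ℝ) + 2) + 2 := by gcongr
      _ = B := hB_def.symm
    have hθ1 : |θ - 1| ≤ B := by
      rw [abs_le, hB_def]
      constructor <;> nlinarith
    have h1θ : |1 - θ| ≤ B := by rw [abs_sub_comm]; exact hθ1
    by_cases hm : (m : ℕ) < (i : ℕ)
    · -- m < i
      have hlt1 : m.castSucc < i := by
        rw [Fin.lt_def]; simpa using hm
      have hy1 : y i < y m.castSucc := hy hlt1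
      have hd1 : δ ≤ y m.castSucc - y i := by
        have h := hyy m.castSucc i (ne_of_lt hlt1)
        rwa [abs_of_pos (by linarith)] at h
      have hle2 : m.succ ≤ i := by
        rw [Fin.le_def]; simpa [Fin.val_succ] using hm
      have hy2 : y i ≤ y m.succ := hy.antitone hle2
      have hz2 : y m.succ < z m := (hintl m).2
      have hd2 : δ ≤ z m - y i := by
        have h := hyz i m
        rwa [abs_sub_comm, abs_of_pos (by linarith)] at h
      have e1 : |(((y m.castSucc - y i) * u⁻¹ - 1 + θ * ((i : ℝ) - (m : ℝ) + 1)) /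
            ((y m.castSucc - y i) * u⁻¹ + θ * ((i : ℝ) - (m : ℝ)))) - 1
            - (θ - 1) / (y m.castSucc - y i) * u| ≤ K * u ^ 2 := by
        rw [hK_def]
        refine frac_est δ B u (y m.castSucc - y i) (θ * ((i : ℝ) - (m : ℝ) + 1) - 1)
          (θ * ((i : ℝ) - (m : ℝ))) _ _ hδ hB1 hu hu2 hd1 ?_ ?_ (by ring) (by ring)
        · have h := habs ((i : ℝ) - (m : ℝ) + 1) (-1)
            (by rw [abs_le]; constructor <;> linarith) (by norm_num)
          calc |θ * ((i : ℝ) - (m : ℝ) + 1) - 1| = |θ * ((i : ℝ) - (m : ℝ) + 1) + (-1)| := by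
                ring_nf
          _ ≤ B := h
        · have h := habs ((i : ℝ) - (m : ℝ)) 0
            (by rw [abs_le]; constructor <;> linarith) (by norm_num)
          simpa using h
      have e2 : |(((z m - y i) * u⁻¹ + θ * ((i : ℝ) - 1 - (m : ℝ))) /
            ((z m - y i) * u⁻¹ - 1 + θ * ((i : ℝ) - (m : ℝ)))) - 1
            - (1 - θ) / (z m - y i) * u| ≤ K * u ^ 2 := by
        rw [hK_def]
        refine frac_est δ B u (z m - y i) (θ * ((i : ℝ) - 1 - (m : ℝ)))
          (θ * ((i : ℝ) - (m : ℝ)) - 1) _ _ hδ hB1 hu hu2 hd2 ?_ ?_ (by ring) (by ring)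
        · have h := habs ((i : ℝ) - 1 - (m : ℝ)) 0
            (by rw [abs_le]; constructor <;> linarith) (by norm_num)
          simpa using h
        · have h := habs ((i : ℝ) - (m : ℝ)) (-1)
            (by rw [abs_le]; constructor <;> linarith) (by norm_num)
          calc |θ * ((i : ℝ) - (m : ℝ)) - 1| = |θ * ((i : ℝ) - (m : ℝ)) + (-1)| := by ring_nf
          _ ≤ B := h
      have hc1 : |(θ - 1) / (y m.castSucc - y i)| ≤ L := by
        rw [hL_def]; exact coef_bound δ B _ _ hδ hd1 hθ1
      have hc2 : |(1 - θ) / (z m - y i)| ≤ L := by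
        rw [hL_def]; exact coef_bound δ B _ _ hδ hd2 h1θ
      constructor
      · have h := pair_combine K L u _ _ _ _ hu hu1 e1 e2 hc1 hc2
        rw [← hK1_def] at h
        simpa only [hF_def, hc_def, if_pos hm] using h
      · simp only [hc_def, if_pos hm]
        calc |(θ - 1) / (y m.castSucc - y i) + (1 - θ) / (z m - y i)|
            ≤ |(θ - 1) / (y m.castSucc - y i)| + |(1 - θ) / (z m - y i)| := abs_add_le _ _
        _ ≤ L + L := by gcongr
        _ = K2 := by rw [hK2_def]; ring
    · -- i ≤ m
      have hm' : (i : ℕ) ≤ (m : ℕ) := Nat.not_lt.mp hm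
      have hlt3 : i < m.succ := by
        rw [Fin.lt_def, Fin.val_succ]; omega
      have hy3 : y m.succ < y i := hy hlt3
      have hd3 : δ ≤ y i - y m.succ := by
        have h := hyy i m.succ (ne_of_lt hlt3)
        rwa [abs_of_pos (by linarith)] at h
      have hle4 : i ≤ m.castSucc := by
        rw [Fin.le_def]; simpa using hm'
      have hy4 : y m.castSucc ≤ y i := hy.antitone hle4
      have hz4 : z m < y m.castSucc := (hintl m).1
      have hd4 : δ ≤ y i - z m := by
        have h := hyz i m
        rwa [abs_of_pos (by linarith)] at h
      have e3 : |(((y i - y m.succ) * u⁻¹ + θ * ((m : ℝ) - (i : ℝ)) + 1) /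
            ((y i - y m.succ) * u⁻¹ + θ * ((m : ℝ) - (i : ℝ) + 1))) - 1
            - (1 - θ) / (y i - y m.succ) * u| ≤ K * u ^ 2 := by
        rw [hK_def]
        refine frac_est δ B u (y i - y m.succ) (θ * ((m : ℝ) - (i : ℝ)) + 1)
          (θ * ((m : ℝ) - (i : ℝ) + 1)) _ _ hδ hB1 hu hu2 hd3 ?_ ?_ (by ring) (by ring)
        · have h := habs ((m : ℝ) - (i : ℝ)) 1
            (by rw [abs_le]; constructor <;> linarith) (by norm_num)
          simpa using h
        · have h := habs ((m : ℝ) - (i : ℝ) + 1) 0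
            (by rw [abs_le]; constructor <;> linarith) (by norm_num)
          simpa using h
      have e4 : |(((y i - z m) * u⁻¹ + θ * ((m : ℝ) - (i : ℝ) + 1)) /
            ((y i - z m) * u⁻¹ + θ * ((m : ℝ) - (i : ℝ)) + 1)) - 1
            - (θ - 1) / (y i - z m) * u| ≤ K * u ^ 2 := by
        rw [hK_def]
        refine frac_est δ B u (y i - z m) (θ * ((m : ℝ) - (i : ℝ) + 1))
          (θ * ((m : ℝ) - (i : ℝ)) + 1) _ _ hδ hB1 hu hu2 hd4 ?_ ?_ (by ring) (by ring)
        · have h := habs ((m : ℝ) - (i : ℝ) + 1) 0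
            (by rw [abs_le]; constructor <;> linarith) (by norm_num)
          simpa using h
        · have h := habs ((m : ℝ) - (i : ℝ)) 1
            (by rw [abs_le]; constructor <;> linarith) (by norm_num)
          simpa using h
      have hc3 : |(1 - θ) / (y i - y m.succ)| ≤ L := by
        rw [hL_def]; exact coef_bound δ B _ _ hδ hd3 h1θ
      have hc4 : |(θ - 1) / (y i - z m)| ≤ L := by
        rw [hL_def]; exact coef_bound δ B _ _ hδ hd4 hθ1
      constructor
      · have h := pair_combine K L u _ _ _ _ hu hu1 e3 e4 hc3 hc4
        rw [← hK1_def] at h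
        simpa only [hF_def, hc_def, if_neg hm] using h
      · simp only [hc_def, if_neg hm]
        calc |(1 - θ) / (y i - y m.succ) + (θ - 1) / (y i - z m)|
            ≤ |(1 - θ) / (y i - y m.succ)| + |(θ - 1) / (y i - z m)| := abs_add_le _ _
        _ ≤ L + L := by gcongr
        _ = K2 := by rw [hK2_def]; ring
  -- product expansion
  have hbound : ∀ j : Fin κ, j ∈ (Finset.univ : Finset (Fin κ)) → |F j - 1| ≤ M * u := by
    intro j _
    have h := hest j
    have huu : u ^ 2 ≤ u := by nlinarith
    calc |F j - 1| = |(F j - 1 - c j * u) + c j * u| := by ring_nf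
    _ ≤ |F j - 1 - c j * u| + |c j| * |u| := by refine (abs_add_le _ _).trans ?_; rw [abs_mul]
    _ ≤ K1 * u ^ 2 + K2 * u := by rw [abs_of_pos hu]; gcongr; exacts [h.1, h.2]
    _ ≤ M * u := by rw [hM_def]; nlinarith [mul_le_mul_of_nonneg_left huu hK10.le]
  have hprod := prod_expand Finset.univ (fun j => F j - 1) (M * u) hu3 hbound
  simp only [Finset.card_univ, Fintype.card_fin] at hprod
  have hprodF : (∏ j : Fin κ, (1 + (F j - 1))) = ∏ j : Fin κ, F j :=
    Finset.prod_congr rfl (fun j _ => by ring)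
  rw [hprodF] at hprod
  -- sum of errors
  have hsum : |∑ j : Fin κ, (F j - 1 - c j * u)| ≤ (κ:ℝ) * (K1 * u ^ 2) := by
    calc |∑ j : Fin κ, (F j - 1 - c j * u)| ≤ ∑ j : Fin κ, |F j - 1 - c j * u| :=
          Finset.abs_sum_le_sum_abs _ _
    _ ≤ ∑ _j : Fin κ, K1 * u ^ 2 := Finset.sum_le_sum (fun j _ => (hest j).1)
    _ = (κ:ℝ) * (K1 * u ^ 2) := by
        rw [Finset.sum_const, nsmul_eq_mul, Finset.card_univ, Fintype.card_fin]
  -- final identity and bound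
  have hsum_split : ∑ j : Fin κ, (F j - 1 - c j * u)
      = (∑ j : Fin κ, (F j - 1)) - (∑ j : Fin κ, c j) * u := by
    rw [Finset.sum_mul, ← Finset.sum_sub_distrib]
  have hu0 : u ≠ 0 := ne_of_gt hu
  have hident : ε⁻¹ * (∏ m, F m) - ε⁻¹ - u⁻¹ * (∑ m, c m)
      = ε⁻¹ * ((∏ m, F m) - 1 - ∑ j : Fin κ, (F j - 1))
        + ε⁻¹ * (∑ j : Fin κ, (F j - 1 - c j * u)) := by
    rw [hsum_split, ← hεu]
    field_simp
    ring
  rw [hident]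
  have hεinv : ε⁻¹ * u ^ 2 = 1 := by rw [← hεu]; field_simp
  have hεinv0 : (0:ℝ) ≤ ε⁻¹ := by positivity
  calc |ε⁻¹ * ((∏ m, F m) - 1 - ∑ j : Fin κ, (F j - 1))
        + ε⁻¹ * (∑ j : Fin κ, (F j - 1 - c j * u))|
      ≤ ε⁻¹ * |(∏ m, F m) - 1 - ∑ j : Fin κ, (F j - 1)|
        + ε⁻¹ * |∑ j : Fin κ, (F j - 1 - c j * u)| := by
        refine (abs_add_le _ _).trans ?_
        rw [abs_mul, abs_mul, abs_of_nonneg hεinv0]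
    _ ≤ ε⁻¹ * (3 ^ κ * (M * u) ^ 2) + ε⁻¹ * ((κ:ℝ) * (K1 * u ^ 2)) := by gcongr
    _ = 3 ^ κ * M ^ 2 * (ε⁻¹ * u ^ 2) + (κ:ℝ) * K1 * (ε⁻¹ * u ^ 2) := by ring
    _ = 3 ^ κ * M ^ 2 + (κ:ℝ) * K1 := by rw [hεinv]; ring
    _ ≤ 3 ^ κ * M ^ 2 + (κ:ℝ) * K1 + 1 := by linarith
end

section
/- Stirling-type limit used in the fixed-time convergence: Fix reals t > 0, c ≥ 0 and y ∈ ℝ. Let (ε_n) be a sequence of positive reals with ε_n → 0 and let (m_n) be a sequence of natural numbers such that ε_n^{1/2}(m_n − t/ε_n) → y. Then lim_{n→∞} ε_n^{−1/2−c} · e^{−t/ε_n} · (t/ε_n)^{m_n} / Γ(c + m_n + 1) = t^{−1/2−c} · (2π)^{−1/2} · exp(−y²/(2t)). -/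
open Filter Real Nat Topology

lemma aux_log_lin_bound {x : ℝ} (hx : |x| ≤ 1/2) : |x - Real.log (1+x)| ≤ 2 * x^2 := by
  have h1 : |(-x)| < 1 := by rw [abs_neg]; linarith [abs_nonneg x]
  have h := Real.abs_log_sub_add_sum_range_le h1 1
  simp [Finset.sum_range_one] at h
  have h3 : x^2 / (1 - |x|) ≤ 2 * x^2 := by
    rw [div_le_iff₀ (by linarith [abs_nonneg x])]
    nlinarith [sq_nonneg x, abs_nonneg x]
  calc |x - Real.log (1+x)| = |-x + Real.log (1+x)| := by rw [← abs_neg]; ring_nf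
    _ ≤ x^2 / (1 - |x|) := h
    _ ≤ 2 * x^2 := h3

lemma aux_g_bound {u : ℝ} (hu : |u| ≤ 1/2) :
    |u - (1+u) * Real.log (1+u) + u^2/2| ≤ 2 * |u|^3 := by
  set f : ℝ → ℝ := fun x => x - (1+x) * Real.log (1+x) + x^2/2 with hf
  set s : Set ℝ := Set.uIcc 0 u with hs
  have hmem : ∀ x ∈ s, |x| ≤ |u| := by
    intro x hx
    rcases Set.mem_uIcc.mp hx with ⟨h1, h2⟩ | ⟨h1, h2⟩ <;> rw [abs_le] <;>
      constructor <;> linarith [le_abs_self u, neg_abs_le u, abs_nonneg u]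
  have hderiv : ∀ x ∈ s, HasDerivWithinAt f (x - Real.log (1+x)) s x := by
    intro x hx
    have hx1 : (0:ℝ) < 1 + x := by
      have := hmem x hx; rw [abs_le] at this; linarith
    have h1 : HasDerivAt (fun x : ℝ => (1+x) * Real.log (1+x))
        (Real.log (1+x) + 1) x := by
      have hlog : HasDerivAt (fun x : ℝ => Real.log (1+x)) (1/(1+x)) x := by
        simpa [Function.comp_def] using ((Real.hasDerivAt_log hx1.ne').comp x
          ((hasDerivAt_const x (1:ℝ)).add (hasDerivAt_id x)))
      have := ((hasDerivAt_const x (1:ℝ)).add (hasDerivAt_id x)).mul hlog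
      exact this.congr_deriv (by simp [hx1.ne'])
    have h2 : HasDerivAt f (1 - (Real.log (1+x) + 1) + x) x := by
      exact ((hasDerivAt_id x).sub h1).add
        (by simpa using (hasDerivAt_pow 2 x).div_const 2)
    have h3 : HasDerivAt f (x - Real.log (1+x)) x := by convert h2 using 1; ring
    exact h3.hasDerivWithinAt
  have hbound : ∀ x ∈ s, ‖x - Real.log (1+x)‖ ≤ 2 * u^2 := by
    intro x hx
    have h1 := hmem x hx
    have := aux_log_lin_bound (le_trans h1 hu)
    calc ‖x - Real.log (1+x)‖ ≤ 2 * x^2 := this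
      _ ≤ 2 * u^2 := by nlinarith [sq_abs x, sq_abs u, abs_nonneg x, abs_nonneg u]
  have key := Convex.norm_image_sub_le_of_norm_hasDerivWithin_le hderiv hbound
    (convex_uIcc 0 u) (Set.left_mem_uIcc) (Set.right_mem_uIcc)
  simp only [hf] at key
  have h0 : (0:ℝ) - (1+0) * Real.log (1+0) + 0^2/2 = 0 := by simp
  rw [Real.norm_eq_abs, Real.norm_eq_abs] at key
  simp only [h0] at key
  calc |u - (1+u) * Real.log (1+u) + u^2/2| ≤ 2 * u^2 * |u - 0| := by simpa using key
    _ = 2 * |u|^3 := by rw [sub_zero, ← sq_abs]; ring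

lemma aux_gamma_ratio (c : ℝ) (hc : 0 ≤ c) :
    Tendsto (fun k : ℕ => (k:ℝ)^c * k ! / Real.Gamma (c + k + 1)) atTop (𝓝 1) := by
  have hc1 : (0:ℝ) < c + 1 := by linarith
  have hprod : ∀ n : ℕ, Real.Gamma (c+1) * ∏ j ∈ Finset.range (n+1), (c+1+j) =
      Real.Gamma (c + n + 2) := by
    intro n
    induction n with
    | zero =>
      norm_num [Finset.prod_range_one]
      rw [show c + (2:ℝ) = (c+1)+1 by ring, Real.Gamma_add_one hc1.ne']
      ring
    | succ n ih =>
      rw [Finset.prod_range_succ, ← mul_assoc, ih,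
        show c + (n+1:ℕ) + 2 = (c + n + 2) + 1 by push_cast; ring,
        Real.Gamma_add_one (by positivity)]
      push_cast
      ring
  have hA : Tendsto (fun n : ℕ => (n:ℝ)^(c+1) * n ! / Real.Gamma (c + n + 2))
      atTop (𝓝 1) := by
    have hG : Real.Gamma (c+1) ≠ 0 := (Real.Gamma_pos_of_pos hc1).ne'
    have h := (Real.GammaSeq_tendsto_Gamma (c+1)).div_const (Real.Gamma (c+1))
    rw [div_self hG] at h
    refine h.congr (fun n => ?_)
    rw [Real.GammaSeq, div_div, mul_comm (∏ j ∈ Finset.range (n+1), (c+1+j)) _, hprod]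
  have hq : Tendsto (fun k : ℕ => (c + k + 1) / (k:ℝ)) atTop (𝓝 1) := by
    have h1 : Tendsto (fun k : ℕ => (c+1) * (1/(k:ℝ)) + 1) atTop (𝓝 ((c+1)*0 + 1)) :=
      (tendsto_const_nhds.mul tendsto_one_div_atTop_nhds_zero_nat).add tendsto_const_nhds
    rw [mul_zero, zero_add] at h1
    refine h1.congr' ?_
    filter_upwards [eventually_ge_atTop 1] with k hk
    have hk0 : (k:ℝ) ≠ 0 := Nat.cast_ne_zero.mpr (by omega)
    field_simp
    ring
  have := hA.mul hq
  rw [mul_one] at this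
  refine this.congr' ?_
  filter_upwards [eventually_ge_atTop 1] with k hk
  have hk0 : (0:ℝ) < (k:ℝ) := by exact_mod_cast Nat.pos_of_ne_zero (by omega)
  have hrw : (k:ℝ)^(c+1) = (k:ℝ)^c * k := by
    rw [Real.rpow_add hk0, Real.rpow_one]
  have hG2 : Real.Gamma (c + k + 2) = (c + k + 1) * Real.Gamma (c + k + 1) := by
    rw [show c + (k:ℝ) + 2 = (c + k + 1) + 1 by ring,
      Real.Gamma_add_one (by positivity)]
  have hGpos : (0:ℝ) < Real.Gamma (c + k + 1) := Real.Gamma_pos_of_pos (by positivity)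
  rw [hrw, hG2]
  field_simp

lemma aux_stirling :
    Tendsto (fun k : ℕ => Real.sqrt (2*π*k) * ((k:ℝ)/Real.exp 1)^k / k !) atTop (𝓝 1) := by
  have hpi : (0:ℝ) < Real.sqrt π := Real.sqrt_pos.mpr Real.pi_pos
  have h := tendsto_const_nhds.div Stirling.tendsto_stirlingSeq_sqrt_pi hpi.ne'
    (f := fun _ : ℕ => Real.sqrt π)
  rw [div_self hpi.ne'] at h
  refine h.congr' ?_
  filter_upwards [eventually_ge_atTop 1] with k hk
  unfold Stirling.stirlingSeq
  simp only [Pi.div_apply]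
  rw [div_div_eq_mul_div,
    show 2*π*(k:ℝ) = π * (2*(k:ℝ)) by ring, Real.sqrt_mul Real.pi_pos.le]
  ring

lemma aux_key_eq (t c : ℝ) (ht : 0 < t) (hc : 0 ≤ c) (L : ℝ) (hL : 0 < L)
    (M : ℕ) (hM : 1 ≤ M) :
    (t/L) ^ (-(1:ℝ)/2 - c) * Real.exp (-L) * L ^ M / Real.Gamma (c + M + 1)
    = t ^ (-(1:ℝ)/2 - c) * (2*π) ^ (-(1:ℝ)/2) *
      ((L / M) ^ (c + 1/2 : ℝ) * ((M:ℝ)^c * M ! / Real.Gamma (c + M + 1)) *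
       (Real.sqrt (2*π*M) * ((M:ℝ)/Real.exp 1)^M / M !) *
       Real.exp (((M:ℝ) - L) - M * Real.log ((M:ℝ) / L))) := by
  have hM0 : (0:ℝ) < (M:ℝ) := by exact_mod_cast Nat.pos_of_ne_zero (by omega)
  have hGpos : (0:ℝ) < Real.Gamma (c + M + 1) := Real.Gamma_pos_of_pos (by positivity)
  have hfac : (0:ℝ) < (M ! : ℝ) := by exact_mod_cast M.factorial_pos
  have h1 : (t/L) ^ (-(1:ℝ)/2 - c) = t ^ (-(1:ℝ)/2 - c) / L ^ (-(1:ℝ)/2 - c) :=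
    Real.div_rpow ht.le hL.le _
  have h2 : (L / (M:ℝ)) ^ (c + 1/2 : ℝ) = L ^ (c + 1/2 : ℝ) / (M:ℝ) ^ (c + 1/2 : ℝ) :=
    Real.div_rpow hL.le hM0.le _
  have h3 : L ^ (c + 1/2 : ℝ) = (L ^ (-(1:ℝ)/2 - c))⁻¹ := by
    rw [show (c + 1/2 : ℝ) = -(-(1:ℝ)/2 - c) by ring, Real.rpow_neg hL.le]
  have h4 : (M:ℝ) ^ (c + 1/2 : ℝ) = (M:ℝ)^c * Real.sqrt M := by
    rw [Real.rpow_add hM0, ← Real.sqrt_eq_rpow]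
  have h5 : Real.sqrt (2*π*(M:ℝ)) = Real.sqrt (2*π) * Real.sqrt M :=
    Real.sqrt_mul (by positivity) _
  have h6 : (2*π:ℝ) ^ (-(1:ℝ)/2) = (Real.sqrt (2*π))⁻¹ := by
    rw [show (-(1:ℝ)/2) = -(1/2) by ring, Real.rpow_neg (by positivity),
      ← Real.sqrt_eq_rpow]
  have hlog : Real.log ((M:ℝ)/L) = -Real.log (L/(M:ℝ)) := by
    rw [← Real.log_inv, inv_div]
  have h7 : Real.exp (((M:ℝ) - L) - M * Real.log ((M:ℝ) / L))
      = Real.exp 1 ^ M * Real.exp (-L) * (L ^ M / (M:ℝ) ^ M) := by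
    rw [hlog, show ((M:ℝ) - L) - (M:ℝ) * -Real.log (L/(M:ℝ))
        = (M:ℝ)*1 + (-L) + (M:ℝ) * Real.log (L/(M:ℝ)) by ring,
      Real.exp_add, Real.exp_add, Real.exp_nat_mul, Real.exp_nat_mul,
      Real.exp_log (by positivity), div_pow]
  have h8 : ((M:ℝ)/Real.exp 1) ^ M = (M:ℝ)^M / Real.exp 1 ^ M := div_pow _ _ _
  rw [h1, h2, h3, h4, h5, h6, h7, h8]
  have e1 : (0:ℝ) < L ^ (-(1:ℝ)/2 - c) := Real.rpow_pos_of_pos hL _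
  have e2 : (0:ℝ) < (M:ℝ)^c := Real.rpow_pos_of_pos hM0 _
  have e3 : (0:ℝ) < Real.sqrt M := Real.sqrt_pos.mpr hM0
  have e4 : (0:ℝ) < Real.sqrt (2*π) := Real.sqrt_pos.mpr (by positivity)
  have e5 : (0:ℝ) < Real.exp 1 ^ M := by positivity
  have e6 : (0:ℝ) < (M:ℝ) ^ M := by positivity
  field_simp

/-- **Stirling-type limit used in the fixed-time convergence.** If `ε_n → 0⁺` and
`ε_n^{1/2}(m_n − t/ε_n) → y`, then
`ε_n^{−1/2−c} e^{−t/ε_n} (t/ε_n)^{m_n} / Γ(c + m_n + 1) → t^{−1/2−c} (2π)^{−1/2} e^{−y²/(2t)}`. -/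
theorem stirling_type_limit (t c y : ℝ) (ht : 0 < t) (hc : 0 ≤ c)
    (ε : ℕ → ℝ) (hεpos : ∀ n, 0 < ε n) (hε0 : Tendsto ε atTop (nhds 0))
    (m : ℕ → ℕ)
    (hm : Tendsto (fun n => (ε n) ^ ((1 : ℝ) / 2) * ((m n : ℝ) - t / ε n)) atTop (nhds y)) :
    Tendsto (fun n =>
        (ε n) ^ (-(1 : ℝ) / 2 - c) * Real.exp (-(t / ε n)) * (t / ε n) ^ (m n) /
          Real.Gamma (c + (m n : ℝ) + 1))
      atTop
      (nhds (t ^ (-(1 : ℝ) / 2 - c) * (2 * Real.pi) ^ (-(1 : ℝ) / 2) *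
        Real.exp (-(y ^ 2) / (2 * t)))) := by
  set L : ℕ → ℝ := fun n => t / ε n with hLdef
  have hLpos : ∀ n, 0 < L n := fun n => div_pos ht (hεpos n)
  have hst : (0:ℝ) < Real.sqrt t := Real.sqrt_pos.mpr ht
  -- L → ∞
  have hLtop : Tendsto L atTop atTop := by
    have h1 : Tendsto (fun n => (ε n)⁻¹) atTop atTop :=
      Tendsto.inv_tendsto_nhdsGT_zero (tendsto_nhdsWithin_iff.mpr
        ⟨hε0, Eventually.of_forall fun n => hεpos n⟩)
    exact (h1.const_mul_atTop ht).congr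
      (fun n => by simp only [hLdef]; rw [div_eq_mul_inv])
  -- √L → ∞
  have hsqtop : Tendsto (fun n => Real.sqrt (L n)) atTop atTop := by
    refine (Tendsto.comp (tendsto_rpow_atTop (by norm_num : (0:ℝ) < 1/2)) hLtop).congr
      (fun n => ?_)
    simp only [Function.comp]
    rw [← Real.sqrt_eq_rpow]
  -- δ → y/√t
  set δ : ℕ → ℝ := fun n => ((m n : ℝ) - L n) / Real.sqrt (L n) with hδdef
  have hδ : Tendsto δ atTop (𝓝 (y / Real.sqrt t)) := by
    refine (hm.div_const (Real.sqrt t)).congr (fun n => ?_)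
    have hε := hεpos n
    have hsε : (0:ℝ) < Real.sqrt (ε n) := Real.sqrt_pos.mpr hε
    simp only [hδdef, hLdef]
    rw [Real.sqrt_div ht.le, ← Real.sqrt_eq_rpow]
    field_simp
  -- u → 0
  set u : ℕ → ℝ := fun n => ((m n : ℝ) - L n) / L n with hudef
  have hu : Tendsto u atTop (𝓝 0) := by
    have h1 : Tendsto (fun n => (Real.sqrt (L n))⁻¹) atTop (𝓝 0) :=
      Tendsto.inv_tendsto_atTop hsqtop
    have h2 := hδ.mul h1
    rw [mul_zero] at h2
    refine h2.congr (fun n => ?_)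
    simp only [hδdef, hudef]
    rw [← div_eq_mul_inv, div_div, Real.mul_self_sqrt (hLpos n).le]
  -- m/L → 1
  have hmdivL : Tendsto (fun n => (m n : ℝ) / L n) atTop (𝓝 1) := by
    have h2 := hu.const_add 1
    rw [add_zero] at h2
    refine h2.congr (fun n => ?_)
    show 1 + ((m n : ℝ) - L n) / L n = (m n : ℝ) / L n
    rw [eq_div_iff (hLpos n).ne', add_mul, one_mul, div_mul_cancel₀ _ (hLpos n).ne']
    ring
  -- m -> inf
  have hmR : Tendsto (fun n => (m n : ℝ)) atTop atTop := by
    refine (Tendsto.pos_mul_atTop one_pos hmdivL hLtop).congr (fun n => ?_)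
    rw [div_mul_cancel₀ _ (hLpos n).ne']
  have hmN : Tendsto m atTop atTop := tendsto_natCast_atTop_iff.mp hmR
  -- δ² → y²/t
  have hδsq : Tendsto (fun n => δ n ^ 2) atTop (𝓝 (y^2 / t)) := by
    have h2 := hδ.pow 2
    rwa [div_pow, Real.sq_sqrt ht.le] at h2
  -- S + δ²/2 → 0
  set S : ℕ → ℝ := fun n => ((m n : ℝ) - L n) - (m n : ℝ) * Real.log ((m n : ℝ) / L n)
    with hSdef
  have hT : Tendsto (fun n => S n + δ n ^ 2 / 2) atTop (𝓝 0) := by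
    have husmall : ∀ᶠ n in atTop, |u n| ≤ 1/2 := by
      have h2 : Tendsto (fun n => |u n|) atTop (𝓝 0) := by
        simpa using hu.abs
      filter_upwards [h2.eventually_lt_const (by norm_num : (0:ℝ) < 1/2)] with n hn
      exact hn.le
    have hbd : Tendsto (fun n => 2 * δ n ^ 2 * |u n|) atTop (𝓝 0) := by
      have h2 := ((hδsq.const_mul 2).mul (by simpa using hu.abs))
      rwa [mul_zero] at h2
    refine squeeze_zero_norm' ?_ hbd
    filter_upwards [husmall] with n hn
    have hLn := hLpos n
    have heq : S n + δ n ^ 2 / 2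
        = L n * (u n - (1 + u n) * Real.log (1 + u n) + (u n)^2 / 2) := by
      have h1u : 1 + u n = (m n : ℝ) / L n := by
        simp only [hudef]; field_simp; ring
      have hδ2 : δ n ^ 2 = L n * (u n)^2 := by
        simp only [hδdef, hudef, div_pow, Real.sq_sqrt hLn.le]
        field_simp
      simp only [hSdef, h1u, hδ2, hudef]
      field_simp
      ring
    rw [heq, Real.norm_eq_abs, abs_mul, abs_of_pos hLn]
    calc L n * |u n - (1 + u n) * Real.log (1 + u n) + (u n)^2/2|
        ≤ L n * (2 * |u n|^3) := by
          exact mul_le_mul_of_nonneg_left (aux_g_bound hn) hLn.le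
      _ = 2 * δ n ^ 2 * |u n| := by
          have hδ2 : δ n ^ 2 = L n * (u n)^2 := by
            simp only [hδdef, hudef, div_pow, Real.sq_sqrt hLn.le]
            field_simp
          rw [hδ2, ← sq_abs (u n)]
          ring
  -- S → -y²/(2t)
  have hS : Tendsto S atTop (𝓝 (-(y^2) / (2*t))) := by
    have h2 := hT.sub (hδsq.div_const 2)
    rw [zero_sub] at h2
    have h3 : -(y^2 / t / 2) = -(y^2) / (2*t) := by ring
    rw [h3] at h2
    refine h2.congr (fun n => ?_)
    ring
  have hP4 : Tendsto (fun n => Real.exp (S n)) atTop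
      (𝓝 (Real.exp (-(y^2) / (2*t)))) := (Real.continuous_exp.tendsto _).comp hS
  -- P1 → 1
  have hP1 : Tendsto (fun n => (L n / (m n : ℝ)) ^ (c + 1/2 : ℝ)) atTop (𝓝 1) := by
    have h2 : Tendsto (fun n => L n / (m n : ℝ)) atTop (𝓝 1) := by
      have h3 := hmdivL.inv₀ one_ne_zero
      rw [inv_one] at h3
      refine h3.congr (fun n => ?_)
      rw [inv_div]
    have h4 := h2.rpow (tendsto_const_nhds (x := (c + 1/2 : ℝ))) (Or.inl one_ne_zero)
    rwa [Real.one_rpow] at h4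
  have hP2 := (aux_gamma_ratio c hc).comp hmN
  have hP3 := aux_stirling.comp hmN
  -- combine
  have hfull := tendsto_const_nhds
    (x := t ^ (-(1:ℝ)/2 - c) * (2*π) ^ (-(1:ℝ)/2)) (f := atTop (α := ℕ)) |>.mul
    (((hP1.mul hP2).mul hP3).mul hP4)
  rw [show (1:ℝ) * 1 * 1 * Real.exp (-(y^2)/(2*t)) = Real.exp (-(y^2)/(2*t)) by ring]
    at hfull
  refine Tendsto.congr' ?_ hfull
  filter_upwards [hmN.eventually_ge_atTop 1] with n hn
  have hteq : t / L n = ε n := by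
    simp only [hLdef]
    field_simp
  have hkey := aux_key_eq t c ht hc (L n) (hLpos n) (m n) hn
  rw [hteq] at hkey
  simp only [Function.comp_apply]
  exact hkey.symm
end

section
/- Asymptotics of the Jack branching coefficients: Fix a real θ > 0, an integer k ≥ 2, a real c > 0, and reals ŷ^k_1 > ŷ^{k−1}_1 > ŷ^k_2 > ŷ^{k−1}_2 > ⋯ > ŷ^{k−1}_{k−1} > ŷ^k_k (a strictly interlacing pair of configurations). Set f(α) := Γ(α+1)/Γ(α+θ) for α ≥ 0. Let (ε_n) be positive reals with ε_n → 0, and let ν(n) = (ν_1(n) ≥ ⋯ ≥ ν_k(n)) and μ(n) = (μ_1(n) ≥ ⋯ ≥ μ_{k−1}(n)) be sequences of partitions with μ(n) interlacing ν(n) (that is, ν_i(n) ≥ μ_i(n) ≥ ν_{i+1}(n)) such that ε_n^{1/2}(ν_i(n) − c/ε_n) → ŷ^k_i for i = 1, …, k and ε_n^{1/2}(μ_i(n) − c/ε_n) → ŷ^{k−1}_i for i = 1, …, k−1. Then lim_{n→∞} ε_n^{−(k−1)(1−θ)/2} · ∏_{1≤i≤j≤k−1} [ f(μ_i(n) − μ_j(n)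 + θ(j−i)) · f(ν_i(n) − ν_{j+1}(n) + θ(j−i)) ] / [ f(μ_i(n) − ν_{j+1}(n) + θ(j−i)) · f(ν_i(n) − μ_j(n) + θ(j−i)) ] = Γ(θ)^{1−k} · ∏_{1≤i<j≤k−1} (ŷ^{k−1}_i − ŷ^{k−1}_j)^{1−θ} · ∏_{1≤i<j≤k} (ŷ^k_i − ŷ^k_j)^{1−θ} · ∏_{i=1}^{k−1} ∏_{j=1}^k |ŷ^{k−1}_i − ŷ^k_j|^{θ−1}. -/
open Filter Real

/-- `f(α) = Γ(α+1)/Γ(α+θ)`, the building block of the Jack branching coefficients. -/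
noncomputable def branchF (θ α : ℝ) : ℝ := Real.Gamma (α + 1) / Real.Gamma (α + θ)

section Aux

lemma branchF_pos {θ α : ℝ} (hθ : 0 < θ) (hα : 0 ≤ α) : 0 < branchF θ α :=
  div_pos (Real.Gamma_pos_of_pos (by linarith)) (Real.Gamma_pos_of_pos (by linarith))

lemma gautschi_lower (θ x : ℝ) (hθ : 0 < θ) (hθ1 : θ ≤ 1) (hx : 0 < x) :
    x ^ (1 - θ) ≤ branchF θ x := by
  have hΓx : 0 < Real.Gamma x := Real.Gamma_pos_of_pos hx
  have hΓxθ : 0 < Real.Gamma (x + θ) := Real.Gamma_pos_of_pos (by linarith)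
  have hΓx1 : 0 < Real.Gamma (x + 1) := Real.Gamma_pos_of_pos (by linarith)
  have key : Real.Gamma (x + θ) ≤ Real.Gamma x * x ^ θ := by
    have hconv := Real.convexOn_log_Gamma.2 (Set.mem_Ioi.2 hx)
      (Set.mem_Ioi.2 (by linarith : (0:ℝ) < x + 1)) (by linarith : (0:ℝ) ≤ 1 - θ)
      (le_of_lt hθ) (by ring)
    have hpt : (1 - θ) • x + θ • (x + 1) = x + θ := by simp [smul_eq_mul]; ring
    rw [hpt] at hconv
    simp only [Function.comp_apply, smul_eq_mul] at hconv
    have hG1 : Real.Gamma (x + 1) = x * Real.Gamma x := Real.Gamma_add_one (ne_of_gt hx)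
    rw [hG1, Real.log_mul (ne_of_gt hx) (ne_of_gt hΓx)] at hconv
    have : Real.log (Real.Gamma (x + θ)) ≤ Real.log (Real.Gamma x) + θ * Real.log x := by
      linarith
    calc Real.Gamma (x + θ) = Real.exp (Real.log (Real.Gamma (x + θ))) := (Real.exp_log hΓxθ).symm
    _ ≤ Real.exp (Real.log (Real.Gamma x) + θ * Real.log x) := Real.exp_le_exp.2 this
    _ = Real.Gamma x * x ^ θ := by
        rw [Real.exp_add, Real.exp_log hΓx, Real.rpow_def_of_pos hx, mul_comm θ]
  have hxθ : (0:ℝ) < x ^ θ := Real.rpow_pos_of_pos hx θ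
  rw [branchF, le_div_iff₀ hΓxθ]
  calc x ^ (1 - θ) * Real.Gamma (x + θ) ≤ x ^ (1 - θ) * (Real.Gamma x * x ^ θ) := by
        exact mul_le_mul_of_nonneg_left key (le_of_lt (Real.rpow_pos_of_pos hx _))
  _ = x * Real.Gamma x := by
        rw [mul_comm (Real.Gamma x), ← mul_assoc, ← Real.rpow_add hx]
        simp
  _ = Real.Gamma (x + 1) := (Real.Gamma_add_one (ne_of_gt hx)).symm

lemma gautschi_upper (θ x : ℝ) (hθ : 0 < θ) (hθ1 : θ ≤ 1) (hx : 0 < x) :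
    branchF θ x ≤ (x + θ) ^ (1 - θ) := by
  have hΓxθ : 0 < Real.Gamma (x + θ) := Real.Gamma_pos_of_pos (by linarith)
  have hxθ : (0:ℝ) < x + θ := by linarith
  have key : Real.Gamma (x + 1) ≤ Real.Gamma (x + θ) * (x + θ) ^ (1 - θ) := by
    have hconv := Real.convexOn_log_Gamma.2 (Set.mem_Ioi.2 hxθ)
      (Set.mem_Ioi.2 (by linarith : (0:ℝ) < x + θ + 1)) (le_of_lt hθ)
      (by linarith : (0:ℝ) ≤ 1 - θ) (by ring)
    have hpt : θ • (x + θ) + (1 - θ) • (x + θ + 1) = x + 1 := by simp [smul_eq_mul]; ring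
    rw [hpt] at hconv
    simp only [Function.comp_apply, smul_eq_mul] at hconv
    have hG1 : Real.Gamma (x + θ + 1) = (x + θ) * Real.Gamma (x + θ) :=
      Real.Gamma_add_one (ne_of_gt hxθ)
    rw [hG1, Real.log_mul (ne_of_gt hxθ) (ne_of_gt hΓxθ)] at hconv
    have h2 : Real.log (Real.Gamma (x + 1)) ≤
        Real.log (Real.Gamma (x + θ)) + (1 - θ) * Real.log (x + θ) := by linarith
    calc Real.Gamma (x + 1)
        = Real.exp (Real.log (Real.Gamma (x + 1))) :=
          (Real.exp_log (Real.Gamma_pos_of_pos (by linarith))).symm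
    _ ≤ Real.exp (Real.log (Real.Gamma (x + θ)) + (1 - θ) * Real.log (x + θ)) :=
          Real.exp_le_exp.2 h2
    _ = Real.Gamma (x + θ) * (x + θ) ^ (1 - θ) := by
          rw [Real.exp_add, Real.exp_log hΓxθ, Real.rpow_def_of_pos hxθ, mul_comm (1-θ)]
  rw [branchF, div_le_iff₀ hΓxθ, mul_comm]
  exact key

lemma tendsto_branchF_base (θ : ℝ) (hθ : 0 < θ) (hθ1 : θ ≤ 1) :
    Tendsto (fun x => branchF θ x / x ^ (1 - θ)) atTop (nhds 1) := by
  have h1θ : (0:ℝ) ≤ 1 - θ := by linarith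
  have hup : Tendsto (fun x : ℝ => ((x + θ) / x) ^ (1 - θ)) atTop (nhds 1) := by
    have h0 : Tendsto (fun x : ℝ => (x + θ) / x) atTop (nhds 1) := by
      have : Tendsto (fun x : ℝ => 1 + θ / x) atTop (nhds (1 + 0)) :=
        (tendsto_const_nhds).add (tendsto_const_nhds.div_atTop tendsto_id)
      rw [add_zero] at this
      refine this.congr' ?_
      filter_upwards [eventually_gt_atTop (0:ℝ)] with x hx
      field_simp
    have hc : ContinuousAt (fun t : ℝ => t ^ (1 - θ)) 1 :=
      Real.continuousAt_rpow_const 1 (1 - θ) (Or.inl one_ne_zero)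
    have := hc.tendsto.comp h0
    rw [Real.one_rpow] at this
    exact this
  refine tendsto_of_tendsto_of_tendsto_of_le_of_le' tendsto_const_nhds hup ?_ ?_
  · filter_upwards [eventually_gt_atTop (0:ℝ)] with x hx
    have := gautschi_lower θ x hθ hθ1 hx
    have hxp : (0:ℝ) < x ^ (1 - θ) := Real.rpow_pos_of_pos hx _
    rw [le_div_iff₀ hxp, one_mul]
    exact this
  · filter_upwards [eventually_gt_atTop (0:ℝ)] with x hx
    have := gautschi_upper θ x hθ hθ1 hx
    have hxp : (0:ℝ) < x ^ (1 - θ) := Real.rpow_pos_of_pos hx _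
    rw [div_le_iff₀ hxp, Real.div_rpow (by linarith) (le_of_lt hx), div_mul_cancel₀]
    · exact this
    · exact ne_of_gt hxp

lemma tendsto_branchF (θ : ℝ) (hθ : 0 < θ) :
    Tendsto (fun x => branchF θ x / x ^ (1 - θ)) atTop (nhds 1) := by
  obtain ⟨n, hn⟩ := exists_nat_ge θ
  induction n generalizing θ with
  | zero => exact absurd (hθ.trans_le hn) (by norm_num)
  | succ m ih =>
    rcases le_or_gt θ 1 with h1 | h1
    · exact tendsto_branchF_base θ hθ h1
    · have ih' := ih (θ - 1) (by linarith) (by push_cast at hn ⊢; linarith)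
      have hfr : Tendsto (fun x : ℝ => x / (x + (θ - 1))) atTop (nhds 1) := by
        have h0 : Tendsto (fun x : ℝ => (x + (θ - 1)) / x) atTop (nhds 1) := by
          have : Tendsto (fun x : ℝ => 1 + (θ - 1) / x) atTop (nhds (1 + 0)) :=
            (tendsto_const_nhds).add (tendsto_const_nhds.div_atTop tendsto_id)
          rw [add_zero] at this
          refine this.congr' ?_
          filter_upwards [eventually_gt_atTop (0:ℝ)] with x hx
          field_simp
        have := h0.inv₀ one_ne_zero
        simp only [inv_one] at this
        refine this.congr' ?_
        filter_upwards [eventually_gt_atTop (0:ℝ)] with x hx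
        rw [inv_div]
      have := ih'.mul hfr
      rw [one_mul] at this
      refine this.congr' ?_
      filter_upwards [eventually_gt_atTop (0:ℝ)] with x hx
      have hxθ1 : (0:ℝ) < x + θ - 1 := by linarith
      have hG : Real.Gamma (x + θ) = (x + θ - 1) * Real.Gamma (x + θ - 1) := by
        have := Real.Gamma_add_one (ne_of_gt hxθ1)
        rw [show x + θ - 1 + 1 = x + θ by ring] at this
        exact this
      have hΓ : (0:ℝ) < Real.Gamma (x + θ - 1) := Real.Gamma_pos_of_pos hxθ1
      have hre : x ^ (1 - (θ - 1)) = x ^ (1 - θ) * x := by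
        rw [show (1 - (θ - 1)) = (1 - θ) + 1 by ring, Real.rpow_add_one (ne_of_gt hx)]
      simp only [branchF, hre, hG]
      rw [show x + (θ - 1) = x + θ - 1 by ring]
      have hxp : (0:ℝ) < x ^ (1 - θ) := Real.rpow_pos_of_pos hx _
      field_simp

lemma tendsto_scaled_branchF (θ L : ℝ) (hθ : 0 < θ) (hL : 0 < L) (s a : ℕ → ℝ)
    (hs : ∀ n, 0 < s n) (hs0 : Tendsto s atTop (nhds 0))
    (hsa : Tendsto (fun n => s n * a n) atTop (nhds L)) :
    Tendsto (fun n => s n ^ (1 - θ) * branchF θ (a n)) atTop (nhds (L ^ (1 - θ))) := by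
  have hsinv : Tendsto (fun n => (s n)⁻¹) atTop atTop := by
    refine tendsto_inv_nhdsGT_zero.comp ?_
    exact tendsto_nhdsWithin_of_tendsto_nhds_of_eventually_within s hs0
      (Eventually.of_forall fun n => Set.mem_Ioi.2 (hs n))
  have ha : Tendsto a atTop atTop := by
    have := hsa.pos_mul_atTop hL hsinv
    refine this.congr fun n => ?_
    rw [mul_comm (s n) (a n), mul_assoc, mul_inv_cancel₀ (ne_of_gt (hs n)), mul_one]
  have haev : ∀ᶠ n in atTop, 0 < a n := ha.eventually_gt_atTop 0
  have h1 := (tendsto_branchF θ hθ).comp ha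
  have h2 : Tendsto (fun n => (s n * a n) ^ (1 - θ)) atTop (nhds (L ^ (1 - θ))) :=
    ((Real.continuousAt_rpow_const L (1 - θ) (Or.inl (ne_of_gt hL))).tendsto).comp hsa
  have := h1.mul h2
  rw [one_mul] at this
  refine this.congr' ?_
  filter_upwards [haev] with n hn
  have hap : (0:ℝ) < (a n) ^ (1 - θ) := Real.rpow_pos_of_pos hn _
  simp only [Function.comp_apply]
  rw [Real.mul_rpow (le_of_lt (hs n)) (le_of_lt hn)]
  field_simp

lemma finIio_succ_eq {κ : ℕ} (j : Fin κ) :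
    Finset.Iio (j.succ) = (Finset.Iic j).map Fin.castSuccEmb := by
  ext a
  simp only [Finset.mem_Iio, Finset.mem_map, Finset.mem_Iic, Fin.coe_castSuccEmb]
  constructor
  · intro h
    have h' : (a : ℕ) < (j : ℕ) + 1 := by simpa [Fin.lt_def] using h
    refine ⟨⟨a, by omega⟩, ?_, ?_⟩
    · simp [Fin.le_def]; omega
    · ext; simp
  · rintro ⟨b, hb, rfl⟩
    simp only [Fin.lt_def, Fin.coe_castSucc, Fin.val_succ]
    have : (b:ℕ) ≤ (j:ℕ) := hb
    omega

lemma finUniv_eq_union {κ : ℕ} (m : Fin κ) :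
    (Finset.univ : Finset (Fin (κ+1))) =
      (Finset.Iic m).map Fin.castSuccEmb ∪ (Finset.Ici m).map (Fin.succEmb κ) := by
  ext a
  simp only [Finset.mem_univ, true_iff, Finset.mem_union, Finset.mem_map, Finset.mem_Iic,
    Finset.mem_Ici, Fin.coe_castSuccEmb, Fin.coe_succEmb]
  rcases le_or_gt (a : ℕ) (m : ℕ) with h | h
  · left
    have hlt : (a:ℕ) < κ := lt_of_le_of_lt h m.isLt
    exact ⟨⟨a, hlt⟩, by simp [Fin.le_def]; omega, by ext; simp⟩
  · right
    have hlt : (a:ℕ) - 1 < κ := by omega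
    refine ⟨⟨(a:ℕ) - 1, hlt⟩, by simp [Fin.le_def]; omega, by ext; simp [Fin.val_succ]; omega⟩

lemma finDisjoint_union {κ : ℕ} (m : Fin κ) :
    Disjoint ((Finset.Iic m).map Fin.castSuccEmb) ((Finset.Ici m).map (Fin.succEmb κ)) := by
  rw [Finset.disjoint_left]
  rintro a ha hb
  simp only [Finset.mem_map, Finset.mem_Iic, Finset.mem_Ici, Fin.coe_castSuccEmb,
    Fin.coe_succEmb] at ha hb
  obtain ⟨b, hb1, rfl⟩ := ha
  obtain ⟨c, hc1, hc2⟩ := hb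
  have h1 : (b:ℕ) ≤ m := hb1
  have h2 : (m:ℕ) ≤ c := hc1
  have h3 : (c:ℕ) + 1 = (b:ℕ) := by
    have := congrArg Fin.val hc2
    simpa using this
  omega

lemma prodLambda {κ : ℕ} (θ : ℝ) (hθ : 0 < θ) (y : Fin (κ+1) → ℝ) (z : Fin κ → ℝ)
    (hz : StrictAnti z)
    (hzy : ∀ m : Fin κ, z m < y m.castSucc ∧ y m.succ < z m) :
    (∏ j : Fin κ, ∏ i ∈ Finset.Iic j,
      ((if i = j then (Real.Gamma θ)⁻¹ else (z i - z j) ^ (1-θ)) *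
          (y i.castSucc - y j.succ) ^ (1-θ) /
        ((z i - y j.succ) ^ (1-θ) * (y i.castSucc - z j) ^ (1-θ))))
    = Real.Gamma θ ^ ((1:ℝ) - ((κ:ℝ)+1)) *
      (∏ j : Fin κ, ∏ i ∈ Finset.Iio j, (z i - z j) ^ (1-θ)) *
      (∏ j : Fin (κ+1), ∏ i ∈ Finset.Iio j, (y i - y j) ^ (1-θ)) *
      ∏ i : Fin κ, ∏ j : Fin (κ+1), |z i - y j| ^ (θ-1) := by
  have hΓ : 0 < Real.Gamma θ := Real.Gamma_pos_of_pos hθ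
  simp only [Finset.prod_div_distrib, Finset.prod_mul_distrib]
  have ha : (∏ j : Fin κ, ∏ i ∈ Finset.Iic j,
      (if i = j then (Real.Gamma θ)⁻¹ else (z i - z j) ^ (1-θ)))
      = (Real.Gamma θ)⁻¹ ^ κ * ∏ j : Fin κ, ∏ i ∈ Finset.Iio j, (z i - z j) ^ (1-θ) := by
    have h1 : ∀ j : Fin κ, (∏ i ∈ Finset.Iic j,
        (if i = j then (Real.Gamma θ)⁻¹ else (z i - z j) ^ (1-θ)))
        = (Real.Gamma θ)⁻¹ * ∏ i ∈ Finset.Iio j, (z i - z j) ^ (1-θ) := by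
      intro j
      rw [← Finset.Iio_insert, Finset.prod_insert (by simp), if_pos rfl]
      congr 1
      refine Finset.prod_congr rfl fun i hi => ?_
      rw [if_neg (ne_of_lt (Finset.mem_Iio.1 hi))]
    simp only [h1]
    rw [Finset.prod_mul_distrib, Finset.prod_const, Finset.card_univ, Fintype.card_fin]
  have hb : (∏ j : Fin (κ+1), ∏ i ∈ Finset.Iio j, (y i - y j) ^ (1-θ))
      = ∏ j : Fin κ, ∏ i ∈ Finset.Iic j, (y i.castSucc - y j.succ) ^ (1-θ) := by
    rw [Fin.prod_univ_succ]
    have h0 : Finset.Iio (0 : Fin (κ+1)) = ∅ := by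
      ext a; simp [Fin.not_lt_zero]
    rw [h0, Finset.prod_empty, one_mul]
    refine Finset.prod_congr rfl fun j _ => ?_
    rw [finIio_succ_eq j, Finset.prod_map]
    rfl
  have hc : (∏ i : Fin κ, ∏ j : Fin (κ+1), |z i - y j| ^ (θ-1))
      = ((∏ j : Fin κ, ∏ i ∈ Finset.Iic j, (z i - y j.succ) ^ (1-θ)) *
         ∏ j : Fin κ, ∏ i ∈ Finset.Iic j, (y i.castSucc - z j) ^ (1-θ))⁻¹ := by
    have hswap : (∏ j : Fin κ, ∏ i ∈ Finset.Iic j, (z i - y j.succ) ^ (1-θ))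
        = ∏ i : Fin κ, ∏ j ∈ Finset.Ici i, (z i - y j.succ) ^ (1-θ) := by
      refine Finset.prod_comm' fun j i => ?_
      simp [Finset.mem_Iic, Finset.mem_Ici]
    rw [hswap, ← Finset.prod_mul_distrib, ← Finset.prod_inv_distrib]
    refine Finset.prod_congr rfl fun m _ => ?_
    rw [finUniv_eq_union m, Finset.prod_union (finDisjoint_union m), Finset.prod_map,
      Finset.prod_map]
    have hA : ∀ i ∈ Finset.Iic m,
        |z m - y (Fin.castSuccEmb i)| ^ (θ-1) = ((y i.castSucc - z m) ^ (1-θ))⁻¹ := by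
      intro i hi
      have hle : i ≤ m := Finset.mem_Iic.1 hi
      have h1 : z m < y i.castSucc := lt_of_le_of_lt (hz.antitone hle) (hzy i).1
      have h2 : (0:ℝ) < y i.castSucc - z m := by linarith
      rw [Fin.coe_castSuccEmb, abs_sub_comm, abs_of_pos h2,
        show θ - 1 = -(1-θ) by ring, Real.rpow_neg (le_of_lt h2)]
    have hB : ∀ j ∈ Finset.Ici m,
        |z m - y (Fin.succEmb κ j)| ^ (θ-1) = ((z m - y j.succ) ^ (1-θ))⁻¹ := by
      intro j hj
      have hle : m ≤ j := Finset.mem_Ici.1 hj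
      have h1 : y j.succ < z m := lt_of_lt_of_le (hzy j).2 (hz.antitone hle)
      have h2 : (0:ℝ) < z m - y j.succ := by linarith
      rw [show y (Fin.succEmb κ j) = y j.succ from rfl, abs_of_pos h2,
        show θ - 1 = -(1-θ) by ring, Real.rpow_neg (le_of_lt h2)]
    rw [Finset.prod_congr rfl hA, Finset.prod_congr rfl hB,
      Finset.prod_inv_distrib, Finset.prod_inv_distrib, ← mul_inv, mul_comm]
  have hΓfac : Real.Gamma θ ^ ((1:ℝ) - ((κ:ℝ)+1)) = (Real.Gamma θ)⁻¹ ^ κ := by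
    rw [show (1:ℝ) - ((κ:ℝ)+1) = -(κ:ℝ) by ring, Real.rpow_neg (le_of_lt hΓ),
      Real.rpow_natCast, inv_pow]
  rw [ha, ← hb, hc, hΓfac, div_eq_mul_inv]

lemma step_a {κ : ℕ} (q : ℝ) (T : Fin κ → Fin κ → ℝ) :
    (∏ j : Fin κ, ∏ i ∈ Finset.Iic j, ((if i = j then q else 1) * T j i))
    = q ^ κ * ∏ j : Fin κ, ∏ i ∈ Finset.Iic j, T j i := by
  simp only [Finset.prod_mul_distrib]
  congr 1
  have h : ∀ j : Fin κ, (∏ i ∈ Finset.Iic j, if i = j then q else 1) = q := by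
    intro j
    rw [Finset.prod_ite_eq' (Finset.Iic j) j (fun _ => q)]
    simp
  rw [Finset.prod_congr rfl (fun j _ => h j), Finset.prod_const, Finset.card_univ,
    Fintype.card_fin]

lemma alg_diag (q G B C D : ℝ) (hq : q ≠ 0) :
    G * (q * B / (q * C * (q * D))) = q⁻¹ * (G * B / (C * D)) := by
  rcases eq_or_ne C 0 with rfl | hC
  · simp
  rcases eq_or_ne D 0 with rfl | hD
  · simp
  field_simp

lemma alg_off (q A B C D : ℝ) (hq : q ≠ 0) :
    q * A * (q * B) / (q * C * (q * D)) = A * B / (C * D) := by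
  rcases eq_or_ne C 0 with rfl | hC
  · simp
  rcases eq_or_ne D 0 with rfl | hD
  · simp
  field_simp

end Aux

set_option maxHeartbeats 2000000 in
/-- **Asymptotics of the Jack branching coefficients.** Here `k = κ+1 ≥ 2`; the configuration
`y : Fin (κ+1) → ℝ` plays the role of `ŷ^k` and `z : Fin κ → ℝ` of `ŷ^{k−1}`, strictly
interlacing as `y_1 > z_1 > y_2 > ⋯ > z_{k−1} > y_k`. If `ε_n → 0⁺` and the partitions
`ν(n)` (with `k` rows) and `μ(n)` (with `k−1` rows), `μ(n)` interlacing `ν(n)`, satisfy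
`ε_n^{1/2}(ν_i(n) − c/ε_n) → y_i` and `ε_n^{1/2}(μ_i(n) − c/ε_n) → z_i`, then
`ε_n^{−(k−1)(1−θ)/2} ∏_{1≤i≤j≤k−1} f(μ_i−μ_j+θ(j−i)) f(ν_i−ν_{j+1}+θ(j−i)) /
  [f(μ_i−ν_{j+1}+θ(j−i)) f(ν_i−μ_j+θ(j−i))]` converges to
`Γ(θ)^{1−k} ∏_{i<j≤k−1}(z_i−z_j)^{1−θ} ∏_{i<j≤k}(y_i−y_j)^{1−θ} ∏_{i,j}|z_i−y_j|^{θ−1}`. -/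
theorem jack_branching_asymptotics (κ : ℕ) (hκ : 1 ≤ κ) (θ c : ℝ) (hθ : 0 < θ) (hc : 0 < c)
    (y : Fin (κ + 1) → ℝ) (z : Fin κ → ℝ)
    (hyz : ∀ m : Fin κ, z m < y m.castSucc ∧ y m.succ < z m)
    (ε : ℕ → ℝ) (hεpos : ∀ n, 0 < ε n) (hε0 : Tendsto ε atTop (nhds 0))
    (ν : ℕ → Fin (κ + 1) → ℕ) (hν : ∀ n, Antitone (ν n))
    (μ : ℕ → Fin κ → ℕ) (hμ : ∀ n, Antitone (μ n))
    (hint : ∀ n, ∀ m : Fin κ, μ n m ≤ ν n m.castSucc ∧ ν n m.succ ≤ μ n m)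
    (hνconv : ∀ i : Fin (κ + 1),
      Tendsto (fun n => (ε n) ^ ((1 : ℝ) / 2) * ((ν n i : ℝ) - c / ε n)) atTop (nhds (y i)))
    (hμconv : ∀ i : Fin κ,
      Tendsto (fun n => (ε n) ^ ((1 : ℝ) / 2) * ((μ n i : ℝ) - c / ε n)) atTop (nhds (z i))) :
    Tendsto (fun n => (ε n) ^ (-((κ : ℝ) * (1 - θ)) / 2) *
        ∏ j : Fin κ, ∏ i ∈ Finset.Iic j,
          (branchF θ ((μ n i : ℝ) - (μ n j : ℝ) + θ * ((j : ℝ) - (i : ℝ))) *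
              branchF θ ((ν n i.castSucc : ℝ) - (ν n j.succ : ℝ) + θ * ((j : ℝ) - (i : ℝ)))) /
            (branchF θ ((μ n i : ℝ) - (ν n j.succ : ℝ) + θ * ((j : ℝ) - (i : ℝ))) *
              branchF θ ((ν n i.castSucc : ℝ) - (μ n j : ℝ) + θ * ((j : ℝ) - (i : ℝ)))))
      atTop
      (nhds (Real.Gamma θ ^ ((1 : ℝ) - ((κ : ℝ) + 1)) *
        (∏ j : Fin κ, ∏ i ∈ Finset.Iio j, (z i - z j) ^ (1 - θ)) *
        (∏ j : Fin (κ + 1), ∏ i ∈ Finset.Iio j, (y i - y j) ^ (1 - θ)) *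
        ∏ i : Fin κ, ∏ j : Fin (κ + 1), |z i - y j| ^ (θ - 1))) := by
  -- the scaling sequence
  set s : ℕ → ℝ := fun n => ε n ^ ((1:ℝ)/2) with hs_def
  have hspos : ∀ n, 0 < s n := fun n => Real.rpow_pos_of_pos (hεpos n) _
  have hs0 : Tendsto s atTop (nhds 0) := by
    have h := (Real.continuous_sqrt.tendsto 0).comp hε0
    rw [Real.sqrt_zero] at h
    refine h.congr fun n => ?_
    simp only [Function.comp_apply, hs_def]
    rw [← Real.sqrt_eq_rpow]
  -- strict monotonicity of the configurations
  have yanti : StrictAnti y := Fin.strictAnti_iff_succ_lt.2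
    (fun m => lt_trans (hyz m).2 (hyz m).1)
  have zanti : StrictAnti z := by
    intro a b hab
    calc z b < y b.castSucc := (hyz b).1
    _ ≤ y a.succ := yanti.antitone (by
        simp only [Fin.le_def, Fin.val_succ, Fin.coe_castSucc]
        exact Fin.lt_def.1 hab)
    _ < z a := (hyz a).2
  -- convergence of scaled differences
  have key : ∀ (a b : ℕ → ℝ) (La Lb t : ℝ),
      Tendsto (fun n => s n * (a n - c/ε n)) atTop (nhds La) →
      Tendsto (fun n => s n * (b n - c/ε n)) atTop (nhds Lb) →
      Tendsto (fun n => s n * (a n - b n + t)) atTop (nhds (La - Lb)) := by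
    intro a b La Lb t h1 h2
    have h3 := (h1.sub h2).add (hs0.const_mul t)
    rw [show La - Lb + t * 0 = La - Lb by ring] at h3
    refine h3.congr fun n => by ring
  have hμc : ∀ i : Fin κ, Tendsto (fun n => s n * ((μ n i : ℝ) - c / ε n)) atTop (nhds (z i)) :=
    fun i => hμconv i
  have hνc : ∀ i : Fin (κ+1),
      Tendsto (fun n => s n * ((ν n i : ℝ) - c / ε n)) atTop (nhds (y i)) :=
    fun i => hνconv i
  -- The rescaled product
  have hrw : ∀ n, (ε n) ^ (-((κ : ℝ) * (1 - θ)) / 2) *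
        (∏ j : Fin κ, ∏ i ∈ Finset.Iic j,
          (branchF θ ((μ n i : ℝ) - (μ n j : ℝ) + θ * ((j : ℝ) - (i : ℝ))) *
              branchF θ ((ν n i.castSucc : ℝ) - (ν n j.succ : ℝ) + θ * ((j : ℝ) - (i : ℝ)))) /
            (branchF θ ((μ n i : ℝ) - (ν n j.succ : ℝ) + θ * ((j : ℝ) - (i : ℝ))) *
              branchF θ ((ν n i.castSucc : ℝ) - (μ n j : ℝ) + θ * ((j : ℝ) - (i : ℝ)))))
      = ∏ j : Fin κ, ∏ i ∈ Finset.Iic j,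
          ((if i = j then s n ^ (θ - 1) else 1) *
          ((branchF θ ((μ n i : ℝ) - (μ n j : ℝ) + θ * ((j : ℝ) - (i : ℝ))) *
              branchF θ ((ν n i.castSucc : ℝ) - (ν n j.succ : ℝ) + θ * ((j : ℝ) - (i : ℝ)))) /
            (branchF θ ((μ n i : ℝ) - (ν n j.succ : ℝ) + θ * ((j : ℝ) - (i : ℝ))) *
              branchF θ ((ν n i.castSucc : ℝ) - (μ n j : ℝ) + θ * ((j : ℝ) - (i : ℝ)))))) := by
    intro n
    have hεq : (ε n) ^ (-((κ:ℝ) * (1-θ)) / 2) = (s n ^ (θ-1)) ^ κ := by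
      show (ε n) ^ (-((κ:ℝ) * (1-θ)) / 2) = ((ε n ^ ((1:ℝ)/2)) ^ (θ-1)) ^ κ
      rw [← Real.rpow_natCast ((ε n ^ ((1:ℝ)/2)) ^ (θ-1)) κ,
        ← Real.rpow_mul (Real.rpow_nonneg (hεpos n).le _),
        ← Real.rpow_mul (hεpos n).le]
      congr 1
      ring
    rw [step_a, hεq]
  refine Tendsto.congr (fun n => (hrw n).symm) ?_
  rw [← prodLambda θ hθ y z zanti hyz]
  refine tendsto_finset_prod _ (fun j _ => tendsto_finset_prod _ (fun i hi => ?_))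
  have hij : i ≤ j := Finset.mem_Iic.1 hi
  have hijR : (0:ℝ) ≤ θ * ((j : ℝ) - (i : ℝ)) := by
    have : (i:ℕ) ≤ (j:ℕ) := hij
    have h2 : ((i:ℕ):ℝ) ≤ ((j:ℕ):ℝ) := Nat.cast_le.2 this
    nlinarith
  -- positivity of the limits
  have hBpos : (0:ℝ) < y i.castSucc - y j.succ := by
    have : i.castSucc < j.succ := Fin.castSucc_lt_succ_iff.2 hij
    have := yanti this
    linarith
  have hCpos : (0:ℝ) < z i - y j.succ := by
    have h1 : z j ≤ z i := zanti.antitone hij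
    have h2 := (hyz j).2
    linarith
  have hDpos : (0:ℝ) < y i.castSucc - z j := by
    have h1 : z j ≤ z i := zanti.antitone hij
    have h2 := (hyz i).1
    linarith
  -- the scaled limits of the four branchF factors
  have hB := tendsto_scaled_branchF θ _ hθ hBpos s _ hspos hs0
    (key (fun n => (ν n i.castSucc : ℝ)) (fun n => (ν n j.succ : ℝ)) _ _
      (θ * ((j : ℝ) - (i : ℝ))) (hνc i.castSucc) (hνc j.succ))
  have hC := tendsto_scaled_branchF θ _ hθ hCpos s _ hspos hs0
    (key (fun n => (μ n i : ℝ)) (fun n => (ν n j.succ : ℝ)) _ _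
      (θ * ((j : ℝ) - (i : ℝ))) (hμc i) (hνc j.succ))
  have hD := tendsto_scaled_branchF θ _ hθ hDpos s _ hspos hs0
    (key (fun n => (ν n i.castSucc : ℝ)) (fun n => (μ n j : ℝ)) _ _
      (θ * ((j : ℝ) - (i : ℝ))) (hνc i.castSucc) (hμc j))
  -- positivity of denominators for every n
  have hCn : ∀ n, 0 < branchF θ ((μ n i : ℝ) - (ν n j.succ : ℝ) + θ * ((j : ℝ) - (i : ℝ))) := by
    intro n
    refine branchF_pos hθ ?_
    have h1 : ν n j.succ ≤ ν n i.succ := hν n (Fin.succ_le_succ_iff.2 hij)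
    have h2 : ν n i.succ ≤ μ n i := (hint n i).2
    have : ((ν n j.succ : ℕ):ℝ) ≤ ((μ n i : ℕ):ℝ) := Nat.cast_le.2 (le_trans h1 h2)
    linarith
  have hDn : ∀ n, 0 < branchF θ ((ν n i.castSucc : ℝ) - (μ n j : ℝ) + θ * ((j : ℝ) - (i : ℝ))) := by
    intro n
    refine branchF_pos hθ ?_
    have h1 : μ n j ≤ μ n i := hμ n hij
    have h2 : μ n i ≤ ν n i.castSucc := (hint n i).1
    have : ((μ n j : ℕ):ℝ) ≤ ((ν n i.castSucc : ℕ):ℝ) := Nat.cast_le.2 (le_trans h1 h2)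
    linarith
  have hCDlim : (0:ℝ) < (z i - y j.succ) ^ (1-θ) * (y i.castSucc - z j) ^ (1-θ) :=
    mul_pos (Real.rpow_pos_of_pos hCpos _) (Real.rpow_pos_of_pos hDpos _)
  rcases eq_or_lt_of_le hij with rfl | hlt
  · -- diagonal case
    simp only [eq_self_iff_true, if_true]
    have hA0 : ∀ n, branchF θ ((μ n i : ℝ) - (μ n i : ℝ) + θ * ((i : ℝ) - (i : ℝ)))
        = (Real.Gamma θ)⁻¹ := by
      intro n
      rw [show ((μ n i : ℝ) - (μ n i : ℝ) + θ * ((i : ℝ) - (i : ℝ))) = 0 by ring, branchF,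
        zero_add, zero_add, Real.Gamma_one, one_div]
    rw [mul_div_assoc]
    have htarget := (tendsto_const_nhds (x := (Real.Gamma θ)⁻¹) (f := (atTop : Filter ℕ))).mul
      (hB.div (hC.mul hD) (ne_of_gt hCDlim))
    refine htarget.congr fun n => ?_
    rw [hA0 n]
    have hq : (0:ℝ) < s n ^ (1-θ) := Real.rpow_pos_of_pos (hspos n) _
    have hth : s n ^ (θ-1) = (s n ^ (1-θ))⁻¹ := by
      rw [show θ - 1 = -(1-θ) by ring, Real.rpow_neg (le_of_lt (hspos n))]
    rw [hth]
    exact alg_diag (s n ^ (1-θ)) (Real.Gamma θ)⁻¹ _ _ _ hq.ne'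
  · -- off-diagonal case
    have hApos : (0:ℝ) < z i - z j := by have := zanti hlt; linarith
    have hA := tendsto_scaled_branchF θ _ hθ hApos s _ hspos hs0
      (key (fun n => (μ n i : ℝ)) (fun n => (μ n j : ℝ)) _ _
        (θ * ((j : ℝ) - (i : ℝ))) (hμc i) (hμc j))
    simp only [if_neg (ne_of_lt hlt), one_mul]

    have htarget := (hA.mul hB).div (hC.mul hD) (ne_of_gt hCDlim)
    refine htarget.congr fun n => ?_
    have hq : (0:ℝ) < s n ^ (1-θ) := Real.rpow_pos_of_pos (hspos n) _
    exact alg_off (s n ^ (1-θ)) _ _ _ _ hq.ne'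
end
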